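/- arXiv:2011.05070 — 3 statements merged into one kernel-verified Lean document; each statement's English description precedes it below -/
import Mathlib

section
/- Let N ≥ 1 and I ≥ 1 be integers, β > 0, μ > 0, u > 0. Let W be a random variable with the Gamma distribution of shape N and rate β, and let X be a random variable with the Gamma distribution of shape I and rate μ, independent of W. Then P( W < u (X + 1) ) = (μ^I e^{μ}/(I-1)!) Σ_{g=0}^{I-1} C(I-1, g) (-1)^{I-1-g} [ μ^{-(g+1)} Γ(g+1, μ) - Σ_{i=0}^{N-1} ((u β)^i / i!) (μ + u β)^{-(g+i+1)} Γ(g+i+1, μ + u β) ]. (This is the first-hop outage term, Eq. (9) of Theorem 1, with β = λ_{s,k}/B.) -/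
open MeasureTheory ProbabilityTheory Real Set

/-- The upper incomplete gamma function `Γ(s, x) = ∫_x^∞ t^(s-1) e^(-t) dt`
(for integer `s ≥ 1`). -/
noncomputable def upperGamma (s : ℕ) (x : ℝ) : ℝ :=
  ∫ t in Set.Ioi x, t ^ (s - 1) * Real.exp (-t)

lemma intOn_pow_exp (k : ℕ) {c : ℝ} (hc : 0 ≤ c) :
    IntegrableOn (fun t : ℝ => t ^ k * Real.exp (-t)) (Ioi c) := by
  have h := Real.GammaIntegral_convergent (s := (k:ℝ) + 1) (by positivity)
  have h2 : IntegrableOn (fun t : ℝ => t ^ k * Real.exp (-t)) (Ioi 0) := by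
    refine h.congr_fun (fun x hx => ?_) measurableSet_Ioi
    dsimp only
    rw [add_sub_cancel_right, Real.rpow_natCast, mul_comm]
  exact h2.mono_set (Ioi_subset_Ioi hc)

lemma shift_int (f : ℝ → ℝ) : ∫ x in Ioi (0:ℝ), f (x + 1) = ∫ y in Ioi (1:ℝ), f y := by
  have := (measurePreserving_add_right volume (1:ℝ)).setIntegral_preimage_emb
    (measurableEmbedding_addRight 1) f (Ioi 1)
  simpa [preimage_add_const_Ioi] using this

lemma shift_integrable {f : ℝ → ℝ} (hf : IntegrableOn f (Ioi (1:ℝ))) :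
    IntegrableOn (fun x => f (x + 1)) (Ioi (0:ℝ)) := by
  have := ((measurePreserving_add_right volume (1:ℝ)).integrableOn_comp_preimage
    (measurableEmbedding_addRight 1) (s := Ioi 1)).mpr hf
  simpa [preimage_add_const_Ioi, Function.comp_def] using this

lemma key_integrable (k : ℕ) {c : ℝ} (hc : 0 < c) :
    IntegrableOn (fun x : ℝ => (x + 1) ^ k * Real.exp (-(c * (x + 1)))) (Ioi 0) := by
  apply shift_integrable (f := fun y => y ^ k * Real.exp (-(c * y)))
  have h2 : IntegrableOn (fun y : ℝ => (c * y) ^ k * Real.exp (-(c * y))) (Ioi 1) :=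
    (integrableOn_Ioi_comp_mul_left_iff (fun t : ℝ => t ^ k * Real.exp (-t)) 1 hc).mpr
      (by rw [mul_one]; exact intOn_pow_exp k hc.le)
  have h3 : IntegrableOn (fun y : ℝ => ((c:ℝ) ^ k)⁻¹ * ((c * y) ^ k * Real.exp (-(c * y)))) (Ioi 1) :=
    h2.const_mul ((c:ℝ) ^ k)⁻¹
  refine h3.congr_fun (fun y hy => ?_) measurableSet_Ioi
  dsimp only
  rw [mul_pow]
  field_simp

lemma key_int (k : ℕ) {c : ℝ} (hc : 0 < c) :
    ∫ x in Ioi (0:ℝ), (x + 1) ^ k * Real.exp (-(c * (x + 1)))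
      = c ^ (-(k + 1 : ℤ)) * upperGamma (k + 1) c := by
  rw [shift_int (fun y => y ^ k * Real.exp (-(c * y)))]
  have h := integral_comp_mul_left_Ioi (fun t : ℝ => t ^ k * Real.exp (-t)) 1 hc
  simp only [mul_one] at h
  have h2 : ∫ y in Ioi (1:ℝ), (c * y) ^ k * Real.exp (-(c * y))
      = c⁻¹ * ∫ t in Ioi c, t ^ k * Real.exp (-t) := by simpa using h
  have h3 : ∫ y in Ioi (1:ℝ), y ^ k * Real.exp (-(c * y))
      = c ^ (-(k:ℤ)) * ∫ y in Ioi (1:ℝ), (c * y) ^ k * Real.exp (-(c * y)) := by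
    rw [← integral_const_mul]
    congr 1; ext y
    rw [mul_pow, zpow_neg, zpow_natCast]
    field_simp
  rw [h3, h2, upperGamma]
  have : ∫ t in Ioi c, t ^ (k + 1 - 1) * Real.exp (-t) = ∫ t in Ioi c, t ^ k * Real.exp (-t) := by
    norm_num
  rw [this]
  rw [show (-(k + 1 : ℤ)) = -(k:ℤ) + (-1) by ring, zpow_add₀ hc.ne']
  ring_nf
  simp [zpow_neg]
  ring

lemma expsum_hasDeriv {b : ℝ} {n : ℕ} (hn : 1 ≤ n) (t : ℝ) :
    HasDerivAt (fun t => Real.exp (-(b * t)) * ∑ i ∈ Finset.range n, (b * t) ^ i / i.factorial)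
      (-(b * ((b * t) ^ (n - 1) / (n - 1).factorial) * Real.exp (-(b * t)))) t := by
  have hexp : HasDerivAt (fun t : ℝ => Real.exp (-(b * t)))
      (Real.exp (-(b * t)) * (-(b * 1))) t := (((hasDerivAt_id t).const_mul b).neg).exp
  induction n, hn using Nat.le_induction with
  | base =>
    have h2 : (fun t : ℝ => Real.exp (-(b * t)) * ∑ i ∈ Finset.range 1, (b * t) ^ i / i.factorial)
        = fun t : ℝ => Real.exp (-(b * t)) := by funext s; simp
    rw [h2]
    convert hexp using 1
    simp
    ring
  | succ n hn ih =>
    have hmono : HasDerivAt (fun t : ℝ => (b * t) ^ n / n.factorial)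
        ((↑n * (b * t) ^ (n - 1) * (b * 1)) / n.factorial) t :=
      (((hasDerivAt_id t).const_mul b).pow n).div_const _
    have h2 : (fun t : ℝ => Real.exp (-(b * t)) * ∑ i ∈ Finset.range (n + 1), (b * t) ^ i / i.factorial)
        = fun t : ℝ => (Real.exp (-(b * t)) * ∑ i ∈ Finset.range n, (b * t) ^ i / i.factorial)
            + Real.exp (-(b * t)) * ((b * t) ^ n / n.factorial) := by
      funext s; rw [Finset.sum_range_succ]; ring
    rw [h2]
    have := ih.add (hexp.mul hmono)
    refine this.congr_deriv ?_
    have hfac : (n.factorial : ℝ) = n * (n - 1).factorial := by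
      rw_mod_cast [← Nat.mul_factorial_pred (by omega)]
    have hpow : (b * t) ^ n = (b * t) ^ (n - 1) * (b * t) := by
      rw [← pow_succ]; congr 1; omega
    have hne : ((n - 1).factorial : ℝ) ≠ 0 := by positivity
    have hnne : (n : ℝ) ≠ 0 := by positivity
    rw [Nat.add_sub_cancel, hfac, hpow]
    field_simp
    ring

lemma gamma_Iio {n : ℕ} (hn : 1 ≤ n) {b : ℝ} (hb : 0 < b) {t : ℝ} (ht : 0 ≤ t) :
    (gammaMeasure n b (Iio t)).toReal
      = 1 - Real.exp (-(b * t)) * ∑ i ∈ Finset.range n, (b * t) ^ i / i.factorial := by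
  set g : ℝ → ℝ := fun x => b ^ n / (n - 1).factorial * x ^ (n - 1) * Real.exp (-(b * x)) with hg
  have hsplit : gammaMeasure n b (Iio t) = ∫⁻ x in Ico 0 t, ENNReal.ofReal (g x) := by
    rw [gammaMeasure, withDensity_apply _ measurableSet_Iio,
      ← Iio_union_Ico_eq_Iio ht, lintegral_union measurableSet_Ico
        ((Set.Iio_disjoint_Ici le_rfl).mono_right Ico_subset_Ici_self),
      lintegral_gammaPDF_of_nonpos le_rfl, zero_add]
    refine setLIntegral_congr_fun measurableSet_Ico (fun x hx => ?_)
    rw [gammaPDF_of_nonneg hx.1, hg]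
    congr 1
    have h1 : (n : ℝ) = ((n - 1 : ℕ) : ℝ) + 1 := by
      push_cast [Nat.cast_sub hn]; ring
    rw [h1, Real.Gamma_nat_eq_factorial, add_sub_cancel_right, Real.rpow_natCast,
      ← Real.rpow_natCast b n, h1]
  have hint : ∫ x in Ico 0 t, g x = (∫⁻ x in Ico 0 t, ENNReal.ofReal (g x)).toReal := by
    rw [integral_eq_lintegral_of_nonneg_ae]
    · exact (ae_restrict_iff' measurableSet_Ico).mpr (ae_of_all _ fun x hx => by
        have : (0:ℝ) ≤ x := hx.1; positivity)
    · exact (Continuous.aestronglyMeasurable (by continuity)).restrict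
  rw [hsplit, ← hint]
  set F : ℝ → ℝ := fun s => 1 - Real.exp (-(b * s)) * ∑ i ∈ Finset.range n, (b * s) ^ i / i.factorial
    with hF
  have hFderiv : ∀ s ∈ uIcc (0:ℝ) t, HasDerivAt F (g s) s := by
    intro s _
    have h := ((expsum_hasDeriv (b := b) hn s).const_sub 1)
    refine h.congr_deriv ?_
    rw [hg]
    simp only
    have hb' : b ^ n = b * b ^ (n - 1) := by rw [← pow_succ']; congr 1; omega
    rw [hb', mul_pow]
    ring
  have hcont : IntervalIntegrable g volume 0 t :=
    (by fun_prop : Continuous g).intervalIntegrable _ _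
  have hIoo : ∫ x in Ico 0 t, g x = ∫ x in (0:ℝ)..t, g x := by
    rw [intervalIntegral.integral_of_le ht, integral_Ico_eq_integral_Ioo,
      integral_Ioc_eq_integral_Ioo]
  rw [hIoo, intervalIntegral.integral_eq_sub_of_hasDerivAt hFderiv hcont]
  have hF0 : F 0 = 0 := by
    cases n with
    | zero => omega
    | succ m =>
      simp [hF, Finset.sum_range_succ']
  rw [hF0, sub_zero, hF]

lemma binom_expand {I : ℕ} (hI : 1 ≤ I) (x : ℝ) :
    x ^ (I - 1) = ∑ g ∈ Finset.range I, ((I - 1).choose g : ℝ) * (-1 : ℝ) ^ (I - 1 - g) * (x + 1) ^ g := by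
  have h := sub_pow (x + 1) (1 : ℝ) (I - 1)
  rw [add_sub_cancel_right] at h
  rw [h, show I - 1 + 1 = I by omega]
  refine Finset.sum_congr rfl fun m hm => ?_
  rw [Finset.mem_range] at hm
  have h2 : (-1 : ℝ) ^ (m + (I - 1)) = (-1 : ℝ) ^ (I - 1 - m) := by
    rw [show m + (I - 1) = (I - 1 - m) + 2 * m by omega, pow_add, pow_mul]
    norm_num
  rw [h2, one_pow]
  ring

lemma expand {I N : ℕ} (hI : 1 ≤ I) (β μ u x : ℝ) :
    x ^ (I - 1) * Real.exp (-(μ * x)) *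
        (1 - Real.exp (-(β * (u * (x + 1)))) *
          ∑ i ∈ Finset.range N, (β * (u * (x + 1))) ^ i / i.factorial)
      = ∑ g ∈ Finset.range I, ((I - 1).choose g : ℝ) * (-1 : ℝ) ^ (I - 1 - g) *
          (Real.exp μ * ((x + 1) ^ g * Real.exp (-(μ * (x + 1))))
            - ∑ i ∈ Finset.range N, (u * β) ^ i / (i.factorial : ℝ) *
                (Real.exp μ * ((x + 1) ^ (g + i) * Real.exp (-((μ + u * β) * (x + 1)))))) := by
  have e1 : Real.exp (-(μ * (x + 1))) = Real.exp (-(μ * x)) * (Real.exp μ)⁻¹ := by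
    rw [← Real.exp_neg, ← Real.exp_add]; ring_nf
  have e2 : Real.exp (-((μ + u * β) * (x + 1)))
      = Real.exp (-(μ * x)) * (Real.exp μ)⁻¹ * Real.exp (-(β * (u * (x + 1)))) := by
    rw [← Real.exp_neg, ← Real.exp_add, ← Real.exp_add]; ring_nf
  rw [binom_expand hI x, Finset.sum_mul, Finset.sum_mul]
  refine Finset.sum_congr rfl fun g hg => ?_
  rw [e1, e2, mul_sub, Finset.mul_sum, Finset.mul_sum, mul_one]
  rw [mul_sub, Finset.mul_sum]
  congr 1
  · field_simp
  · refine Finset.sum_congr rfl fun i hi => ?_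
    have e3 : (β * (u * (x + 1))) ^ i = (u * β) ^ i * (x + 1) ^ i := by
      rw [show β * (u * (x + 1)) = (u * β) * (x + 1) by ring, mul_pow]
    rw [e3, pow_add]
    field_simp

lemma integral_expand {I N : ℕ} {β μ u : ℝ} (hβ : 0 < β) (hμ : 0 < μ) (hu : 0 < u) :
    (∫ x in Ioi (0:ℝ), ∑ g ∈ Finset.range I, ((I - 1).choose g : ℝ) * (-1 : ℝ) ^ (I - 1 - g) *
        (Real.exp μ * ((x + 1) ^ g * Real.exp (-(μ * (x + 1))))
          - ∑ i ∈ Finset.range N, (u * β) ^ i / (i.factorial : ℝ) *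
              (Real.exp μ * ((x + 1) ^ (g + i) * Real.exp (-((μ + u * β) * (x + 1)))))))
    = Real.exp μ * ∑ g ∈ Finset.range I, ((I - 1).choose g : ℝ) * (-1 : ℝ) ^ (I - 1 - g) *
        (μ ^ (-(g + 1 : ℤ)) * upperGamma (g + 1) μ -
          ∑ i ∈ Finset.range N, (u * β) ^ i / (Nat.factorial i : ℝ) *
            (μ + u * β) ^ (-(g + i + 1 : ℤ)) * upperGamma (g + i + 1) (μ + u * β)) := by
  have hμβ : 0 < μ + u * β := by positivity
  have ha : ∀ g : ℕ, IntegrableOn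
      (fun x : ℝ => Real.exp μ * ((x + 1) ^ g * Real.exp (-(μ * (x + 1))))) (Ioi 0) :=
    fun g => (key_integrable g hμ).const_mul _
  have hb : ∀ g i : ℕ, IntegrableOn (fun x : ℝ => (u * β) ^ i / (i.factorial : ℝ) *
      (Real.exp μ * ((x + 1) ^ (g + i) * Real.exp (-((μ + u * β) * (x + 1)))))) (Ioi 0) :=
    fun g i => ((key_integrable (g + i) hμβ).const_mul _).const_mul _
  have hsumint : ∀ g : ℕ, IntegrableOn (fun x : ℝ =>
      ((I - 1).choose g : ℝ) * (-1 : ℝ) ^ (I - 1 - g) *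
        (Real.exp μ * ((x + 1) ^ g * Real.exp (-(μ * (x + 1))))
          - ∑ i ∈ Finset.range N, (u * β) ^ i / (i.factorial : ℝ) *
              (Real.exp μ * ((x + 1) ^ (g + i) * Real.exp (-((μ + u * β) * (x + 1))))))) (Ioi 0) :=
    fun g => (((ha g).sub (integrable_finset_sum _ fun i _ => hb _ i)).const_mul _)
  rw [integral_finset_sum _ fun g _ => hsumint g, Finset.mul_sum]
  refine Finset.sum_congr rfl fun g _ => ?_
  have hinner : ∀ i : ℕ, (∫ x in Ioi (0:ℝ), (u * β) ^ i / (i.factorial : ℝ) *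
      (Real.exp μ * ((x + 1) ^ (g + i) * Real.exp (-((μ + u * β) * (x + 1))))))
      = Real.exp μ * ((u * β) ^ i / (i.factorial : ℝ) *
          (μ + u * β) ^ (-(g + i + 1 : ℤ)) * upperGamma (g + i + 1) (μ + u * β)) := by
    intro i
    rw [integral_const_mul, integral_const_mul, key_int (g + i) hμβ]
    have : (-(↑(g + i) + 1) : ℤ) = -(g + i + 1 : ℤ) := by push_cast; ring
    rw [this]
    ring
  rw [integral_const_mul, integral_sub (ha g) (integrable_finset_sum _ fun i _ => hb _ i),
    integral_const_mul, key_int g hμ,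
    integral_finset_sum _ fun i _ => hb _ i,
    Finset.sum_congr rfl fun i _ => hinner i, ← Finset.mul_sum]
  ring

lemma gammaPDFReal_eq_npow {n : ℕ} (hn : 1 ≤ n) (b : ℝ) {x : ℝ} (hx : 0 ≤ x) :
    gammaPDFReal n b x = b ^ n / ((n - 1).factorial : ℝ) * x ^ (n - 1) * Real.exp (-(b * x)) := by
  rw [gammaPDFReal, if_pos hx]
  have h1 : ((n : ℝ)) = ((n - 1 : ℕ) : ℝ) + 1 := by push_cast [Nat.cast_sub hn]; ring
  rw [h1, Real.Gamma_nat_eq_factorial, add_sub_cancel_right, Real.rpow_natCast,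
    ← Real.rpow_natCast b n, h1]

/-- Let `W` be Gamma-distributed with shape `N ≥ 1` and rate `β > 0`, and `X` be
Gamma-distributed with shape `I ≥ 1` and rate `μ > 0`, independent of `W`.
Then `P(W < u (X + 1))` equals the expression of Eq. (9) of Theorem 1. -/
theorem first_hop_outage
    {Ω : Type*} [MeasurableSpace Ω] (P : Measure Ω) [IsProbabilityMeasure P]
    (N : ℕ) (hN : 1 ≤ N) (I : ℕ) (hI : 1 ≤ I)
    (β μ u : ℝ) (hβ : 0 < β) (hμ : 0 < μ) (hu : 0 < u)
    (W X : Ω → ℝ) (hWmeas : Measurable W) (hXmeas : Measurable X)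
    (hWdist : Measure.map W P = gammaMeasure N β)
    (hXdist : Measure.map X P = gammaMeasure I μ)
    (hindep : IndepFun W X P) :
    (P {ω | W ω < u * (X ω + 1)}).toReal =
      μ ^ I * Real.exp μ / (Nat.factorial (I - 1) : ℝ) *
        ∑ g ∈ Finset.range I, ((I - 1).choose g : ℝ) * (-1 : ℝ) ^ (I - 1 - g) *
          (μ ^ (-(g + 1 : ℤ)) * upperGamma (g + 1) μ -
            ∑ i ∈ Finset.range N, (u * β) ^ i / (Nat.factorial i : ℝ) *
              (μ + u * β) ^ (-(g + i + 1 : ℤ)) * upperGamma (g + i + 1) (μ + u * β)) := by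
  have hNpos : (0 : ℝ) < N := by exact_mod_cast hN
  have hIpos : (0 : ℝ) < I := by exact_mod_cast hI
  haveI : IsProbabilityMeasure (gammaMeasure (N : ℝ) β) := isProbabilityMeasure_gammaMeasure hNpos hβ
  haveI : IsProbabilityMeasure (gammaMeasure (I : ℝ) μ) := isProbabilityMeasure_gammaMeasure hIpos hμ
  set Fb : ℝ → ℝ := fun t => 1 - Real.exp (-(β * t)) *
    ∑ i ∈ Finset.range N, (β * t) ^ i / i.factorial with hFb
  have hFbeq : ∀ t : ℝ, 0 ≤ t → gammaMeasure N β (Iio t) = ENNReal.ofReal (Fb t) := by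
    intro t ht
    rw [show Fb t = (gammaMeasure N β (Iio t)).toReal from (gamma_Iio hN hβ ht).symm,
      ENNReal.ofReal_toReal (measure_ne_top _ _)]
  have hFbnn : ∀ t : ℝ, 0 ≤ t → 0 ≤ Fb t := by
    intro t ht
    rw [show Fb t = (gammaMeasure N β (Iio t)).toReal from (gamma_Iio hN hβ ht).symm]
    exact ENNReal.toReal_nonneg
  have hFbcont : Continuous Fb :=
    continuous_const.sub ((Real.continuous_exp.comp (by fun_prop)).mul
      (continuous_finset_sum _ fun i _ => by fun_prop))
  have hcontc : Continuous (fun x : ℝ => Fb (u * (x + 1))) := hFbcont.comp (by fun_prop)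
  have hsetm : MeasurableSet {p : ℝ × ℝ | p.2 < u * (p.1 + 1)} :=
    measurableSet_lt measurable_snd (by fun_prop)
  have hmap : Measure.map (fun ω => (X ω, W ω)) P
      = (gammaMeasure I μ).prod (gammaMeasure N β) := by
    rw [← hXdist, ← hWdist]
    exact (indepFun_iff_map_prod_eq_prod_map_map hXmeas.aemeasurable
      hWmeas.aemeasurable).mp hindep.symm
  have h1 : P {ω | W ω < u * (X ω + 1)}
      = ∫⁻ x, gammaMeasure N β (Iio (u * (x + 1))) ∂(gammaMeasure I μ) := by
    have e : {ω | W ω < u * (X ω + 1)}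
        = (fun ω => (X ω, W ω)) ⁻¹' {p : ℝ × ℝ | p.2 < u * (p.1 + 1)} := rfl
    rw [e, ← Measure.map_apply (hXmeas.prodMk hWmeas) hsetm, hmap, Measure.prod_apply hsetm]
    refine lintegral_congr fun x => ?_
    congr 1
  have hae0 : ∀ᵐ x ∂(gammaMeasure I μ), (0 : ℝ) ≤ x := by
    rw [ae_iff]
    have hs : {x : ℝ | ¬ (0 : ℝ) ≤ x} = Iio 0 := by ext x; simp [Set.mem_Iio, not_le]
    rw [hs, gammaMeasure, withDensity_apply _ measurableSet_Iio]
    exact lintegral_gammaPDF_of_nonpos le_rfl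
  have h2 : ∫⁻ x, gammaMeasure N β (Iio (u * (x + 1))) ∂(gammaMeasure I μ)
      = ∫⁻ x, ENNReal.ofReal (Fb (u * (x + 1))) ∂(gammaMeasure I μ) := by
    refine lintegral_congr_ae ?_
    filter_upwards [hae0] with x hx
    exact hFbeq _ (by positivity)
  have h3 : ∫⁻ x, ENNReal.ofReal (Fb (u * (x + 1))) ∂(gammaMeasure I μ)
      = ∫⁻ x, ENNReal.ofReal (gammaPDFReal I μ x * Fb (u * (x + 1))) := by
    rw [gammaMeasure, lintegral_withDensity_eq_lintegral_mul (volume : Measure ℝ)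
      (f := gammaPDF I μ) ((measurable_gammaPDFReal I μ).ennreal_ofReal)
      (hcontc.measurable.ennreal_ofReal)]
    refine lintegral_congr fun x => ?_
    simp only [Pi.mul_apply, gammaPDF]
    rw [← ENNReal.ofReal_mul (gammaPDFReal_nonneg hIpos hμ x)]
  have h4 : (∫⁻ x, ENNReal.ofReal (gammaPDFReal I μ x * Fb (u * (x + 1)))).toReal
      = ∫ x : ℝ, gammaPDFReal I μ x * Fb (u * (x + 1)) := by
    rw [integral_eq_lintegral_of_nonneg_ae]
    · refine ae_of_all _ fun x => ?_
      rcases le_or_gt 0 x with h | h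
      · exact mul_nonneg (gammaPDFReal_nonneg hIpos hμ x) (hFbnn _ (by positivity))
      · simp [gammaPDFReal, not_le.mpr h]
    · exact ((measurable_gammaPDFReal I μ).mul hcontc.measurable).aestronglyMeasurable
  have h5 : ∫ x : ℝ, gammaPDFReal I μ x * Fb (u * (x + 1))
      = ∫ x in Ioi (0:ℝ), gammaPDFReal I μ x * Fb (u * (x + 1)) := by
    rw [← integral_indicator measurableSet_Ioi]
    refine integral_congr_ae ?_
    have hne : ∀ᵐ x : ℝ ∂(volume : Measure ℝ), x ≠ 0 := by
      rw [ae_iff]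
      have hs : {x : ℝ | ¬ x ≠ 0} = {0} := by ext x; simp
      rw [hs]
      exact measure_singleton 0
    filter_upwards [hne] with x hx
    rcases lt_trichotomy x 0 with h | h | h
    · rw [Set.indicator_of_notMem (by simpa using h.not_gt)]
      simp [gammaPDFReal, not_le.mpr h]
    · exact absurd h hx
    · exact (Set.indicator_of_mem (Set.mem_Ioi.mpr h)
        (fun x => gammaPDFReal I μ x * Fb (u * (x + 1)))).symm
  have h6 : ∫ x in Ioi (0:ℝ), gammaPDFReal I μ x * Fb (u * (x + 1))
      = μ ^ I / ((I - 1).factorial : ℝ) *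
        ∫ x in Ioi (0:ℝ), ∑ g ∈ Finset.range I,
          ((I - 1).choose g : ℝ) * (-1 : ℝ) ^ (I - 1 - g) *
          (Real.exp μ * ((x + 1) ^ g * Real.exp (-(μ * (x + 1))))
            - ∑ i ∈ Finset.range N, (u * β) ^ i / (i.factorial : ℝ) *
                (Real.exp μ * ((x + 1) ^ (g + i) * Real.exp (-((μ + u * β) * (x + 1)))))) := by
    rw [← integral_const_mul]
    refine setIntegral_congr_fun measurableSet_Ioi fun x hx => ?_
    have hx0 : (0 : ℝ) ≤ x := le_of_lt hx
    rw [gammaPDFReal_eq_npow hI μ hx0, hFb]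
    rw [show μ ^ I / ((I - 1).factorial : ℝ) * x ^ (I - 1) * Real.exp (-(μ * x)) *
        (1 - Real.exp (-(β * (u * (x + 1)))) *
          ∑ i ∈ Finset.range N, (β * (u * (x + 1))) ^ i / i.factorial)
      = μ ^ I / ((I - 1).factorial : ℝ) * (x ^ (I - 1) * Real.exp (-(μ * x)) *
        (1 - Real.exp (-(β * (u * (x + 1)))) *
          ∑ i ∈ Finset.range N, (β * (u * (x + 1))) ^ i / i.factorial)) by ring,
      expand hI β μ u x]
  rw [h1, h2, h3, h4, h5, h6, integral_expand hβ hμ hu]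
  ring
end

section
/- Let N ≥ 1 and I ≥ 1 be integers, B > 0, μ > 0, u > 0, and let X be a random variable with the Gamma distribution of shape I and rate μ. For each λ > 0 let W^{(λ)} be a random variable with the Gamma distribution of shape N and rate λ/B, independent of X. Then lim_{λ → 0+} λ^{-N} P( W^{(λ)} < u (X + 1) ) = (u^N / (B^N N!)) E[(X+1)^N], and this limit equals (u^N/(B^N N!)) (μ^I e^{μ}/(I-1)!) Σ_{g=0}^{I-1} C(I-1, g) (-1)^{I-1-g} μ^{-(g+N+1)} Γ(g+N+1, μ). (This is the exact high-SNR asymptotic of the first-hop outage term in Theorem 2, Eq. (11).) -/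
open MeasureTheory ProbabilityTheory Real Set Filter Topology
open scoped ENNReal NNReal

lemma integrableOn_pow_mul_exp (m : ℕ) {r : ℝ} (hr : 0 < r) (a : ℝ) :
    IntegrableOn (fun x : ℝ => x ^ m * Real.exp (-(r * x))) (Ioi a) := by
  apply integrable_of_isBigO_exp_neg (half_pos hr)
  · exact Continuous.continuousOn (by continuity)
  · have h : Tendsto (fun x : ℝ => x ^ m * Real.exp (-(r/2) * x)) atTop (𝓝 0) := by
      have := tendsto_rpow_mul_exp_neg_mul_atTop_nhds_zero (m : ℝ) (r/2) (half_pos hr)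
      simpa [Real.rpow_natCast] using this
    have h1 : (fun x : ℝ => x ^ m * Real.exp (-(r/2) * x)) =O[atTop] (fun _ => (1:ℝ)) :=
      h.isBigO_one ℝ
    have h2 := h1.mul (Asymptotics.isBigO_refl (fun x : ℝ => Real.exp (-(r/2) * x)) atTop)
    have heq : (fun x : ℝ => x ^ m * Real.exp (-(r * x)))
        = fun x : ℝ => (x ^ m * Real.exp (-(r/2) * x)) * Real.exp (-(r/2) * x) := by
      funext x
      rw [mul_assoc, ← Real.exp_add]
      ring_nf
    rw [heq]
    simpa using h2

lemma integrableOn_pow_mul_pow_mul_exp (m k : ℕ) {r : ℝ} (hr : 0 < r) (a : ℝ) :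
    IntegrableOn (fun x : ℝ => x ^ m * (x+1) ^ k * Real.exp (-(r * x))) (Ioi a) := by
  have heq : ∀ x : ℝ, x ^ m * (x+1) ^ k * Real.exp (-(r * x))
      = ∑ j ∈ Finset.range (k+1), (k.choose j : ℝ) * (x ^ (m+j) * Real.exp (-(r * x))) := by
    intro x
    rw [add_pow, Finset.mul_sum, Finset.sum_mul]
    refine Finset.sum_congr rfl fun j hj => ?_
    rw [one_pow, pow_add]
    ring
  simp_rw [heq]
  exact integrable_finset_sum _ fun j _ => ((integrableOn_pow_mul_exp (m+j) hr a).const_mul _)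

lemma gammaPDFReal_nat {n : ℕ} (hn : 1 ≤ n) (r : ℝ) {x : ℝ} (hx : 0 ≤ x) :
    gammaPDFReal n r x = r ^ n / (n-1).factorial * x ^ (n-1) * Real.exp (-(r*x)) := by
  rw [gammaPDFReal, if_pos hx]
  have h1 : ((n:ℝ)) - 1 = ((n-1 : ℕ) : ℝ) := by
    rw [Nat.cast_sub hn]; norm_num
  have h2 : Real.Gamma (n:ℝ) = (n-1).factorial := by
    rw [show ((n:ℝ)) = ((n-1:ℕ):ℝ) + 1 by rw [Nat.cast_sub hn]; norm_num,
      Real.Gamma_nat_eq_factorial]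
  rw [h1, h2, Real.rpow_natCast, Real.rpow_natCast]

lemma gammaMeasure_Iio_toReal {n : ℕ} (hn : 1 ≤ n) {r t : ℝ} (hr : 0 < r) (ht : 0 ≤ t) :
    (gammaMeasure n r (Iio t)).toReal
      = ∫ y in Ico 0 t, r ^ n / (n-1).factorial * (y ^ (n-1) * Real.exp (-(r*y))) := by
  have hcont : Continuous (fun y : ℝ => r ^ n / (n-1).factorial * (y ^ (n-1) * Real.exp (-(r*y)))) := by
    continuity
  have hint : IntegrableOn (fun y : ℝ => r ^ n / (n-1).factorial * (y ^ (n-1) * Real.exp (-(r*y)))) (Ico 0 t) :=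
    (hcont.integrableOn_Icc (a := 0) (b := t)).mono_set Ico_subset_Icc_self
  have hnn : 0 ≤ᵐ[volume.restrict (Ico 0 t)]
      fun y : ℝ => r ^ n / (n-1).factorial * (y ^ (n-1) * Real.exp (-(r*y))) := by
    rw [EventuallyLE, ae_restrict_iff' measurableSet_Ico]
    exact ae_of_all _ fun y hy => by
      have := hy.1
      positivity
  rw [gammaMeasure, withDensity_apply _ measurableSet_Iio]
  have hsplit : ∫⁻ y in Iio t, gammaPDF n r y = ∫⁻ y in Ico 0 t, gammaPDF n r y := by
    rw [← Iio_union_Ico_eq_Iio ht, lintegral_union measurableSet_Ico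
      ((Iio_disjoint_Ici le_rfl).mono_right Ico_subset_Ici_self),
      lintegral_gammaPDF_of_nonpos le_rfl, zero_add]
  rw [hsplit,
    setLIntegral_congr_fun_ae measurableSet_Ico (ae_of_all _ fun y (hy : y ∈ Ico 0 t) => by
      rw [gammaPDF, gammaPDFReal_nat hn r hy.1, mul_assoc]),
    ← ofReal_integral_eq_lintegral_ofReal hint hnn,
    ENNReal.toReal_ofReal (setIntegral_nonneg measurableSet_Ico fun y hy => by
      have := hy.1; positivity)]

lemma integral_Ico_pow (m : ℕ) {t : ℝ} (ht : 0 ≤ t) :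
    ∫ y in Ico (0:ℝ) t, y ^ m = t ^ (m+1) / (m+1) := by
  rw [Measure.restrict_congr_set Ico_ae_eq_Ioc, ← intervalIntegral.integral_of_le ht,
    integral_pow]
  simp

lemma key_eq {n : ℕ} (hn : 1 ≤ n) {B lam t : ℝ} (hB : 0 < B) (hl : 0 < lam) (ht : 0 ≤ t) :
    lam ^ (-(n:ℤ)) * (gammaMeasure n (lam/B) (Iio t)).toReal
      = (B^n * (n-1).factorial)⁻¹ * ∫ y in Ico 0 t, y ^ (n-1) * Real.exp (-(lam/B*y)) := by
  rw [gammaMeasure_Iio_toReal hn (div_pos hl hB) ht, MeasureTheory.integral_const_mul,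
    ← mul_assoc]
  congr 1
  rw [zpow_neg, zpow_natCast, div_pow]
  have h1 : lam ^ n ≠ 0 := pow_ne_zero _ hl.ne'
  have h2 : B ^ n ≠ 0 := pow_ne_zero _ hB.ne'
  have h3 : ((n-1).factorial : ℝ) ≠ 0 := Nat.cast_ne_zero.mpr (Nat.factorial_ne_zero _)
  field_simp

lemma key_bounds {n : ℕ} (hn : 1 ≤ n) {c t : ℝ} (hc : 0 < c) (ht : 0 ≤ t) :
    0 ≤ (∫ y in Ico (0:ℝ) t, y ^ (n-1) * Real.exp (-(c*y)))
    ∧ (∫ y in Ico (0:ℝ) t, y ^ (n-1) * Real.exp (-(c*y))) ≤ t^n / n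
    ∧ t^n / n - (∫ y in Ico (0:ℝ) t, y ^ (n-1) * Real.exp (-(c*y))) ≤ c * (t^(n+1) / (n+1)) := by
  have hcont : Continuous (fun y : ℝ => y ^ (n-1) * Real.exp (-(c*y))) := by continuity
  have hint : IntegrableOn (fun y : ℝ => y ^ (n-1) * Real.exp (-(c*y))) (Ico 0 t) :=
    (hcont.integrableOn_Icc).mono_set Ico_subset_Icc_self
  have hintp : ∀ m : ℕ, IntegrableOn (fun y : ℝ => y ^ m) (Ico (0:ℝ) t) := fun m =>
    ((continuous_pow m).integrableOn_Icc).mono_set Ico_subset_Icc_self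
  have hpowval : ∫ y in Ico (0:ℝ) t, y ^ (n-1) = t^n / n := by
    rw [integral_Ico_pow (n-1) ht, Nat.sub_add_cancel hn]
    congr 2
    rw [Nat.cast_sub hn]; norm_num
  refine ⟨setIntegral_nonneg measurableSet_Ico fun y hy => by have := hy.1; positivity, ?_, ?_⟩
  · rw [← hpowval]
    refine setIntegral_mono_on hint (hintp (n-1)) measurableSet_Ico fun y hy => ?_
    have h1 : Real.exp (-(c*y)) ≤ 1 := by
      rw [Real.exp_le_one_iff]
      have := hy.1
      nlinarith
    nlinarith [pow_nonneg hy.1 (n-1)]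
  · have hsub : t^n / n - (∫ y in Ico (0:ℝ) t, y ^ (n-1) * Real.exp (-(c*y)))
        = ∫ y in Ico (0:ℝ) t, (y ^ (n-1) - y ^ (n-1) * Real.exp (-(c*y))) := by
      rw [← hpowval]
      exact (integral_sub (hintp (n-1)) hint).symm
    rw [hsub]
    have hval2 : ∫ y in Ico (0:ℝ) t, c * y ^ n = c * (t^(n+1)/(n+1)) := by
      rw [MeasureTheory.integral_const_mul, integral_Ico_pow n ht]
    rw [← hval2]
    refine setIntegral_mono_on ((hintp (n-1)).sub hint) ((hintp n).const_mul c)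
      measurableSet_Ico fun y hy => ?_
    have hy0 : 0 ≤ y := hy.1
    have h1 : 1 - Real.exp (-(c*y)) ≤ c * y := by
      have := Real.add_one_le_exp (-(c*y))
      linarith
    have h4 : 0 ≤ 1 - Real.exp (-(c*y)) := by
      have : Real.exp (-(c*y)) ≤ 1 := by
        rw [Real.exp_le_one_iff]; nlinarith
      linarith
    have h5 : y ^ (n-1) * y = y ^ n := by
      rw [← pow_succ, Nat.sub_add_cancel hn]
    nlinarith [pow_nonneg hy0 (n-1)]

lemma limit_val {n : ℕ} (hn : 1 ≤ n) {B t : ℝ} (hB : 0 < B) :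
    (B^n * (n-1).factorial)⁻¹ * (t^n / n) = t^n / (B^n * n.factorial) := by
  have h : (n.factorial : ℝ) = n * (n-1).factorial := by
    exact_mod_cast congrArg (Nat.cast (R := ℝ)) (Nat.mul_factorial_pred (by omega : n ≠ 0)).symm
  have hn0 : (n:ℝ) ≠ 0 := Nat.cast_ne_zero.mpr (by omega)
  have h2 : ((n-1).factorial : ℝ) ≠ 0 := Nat.cast_ne_zero.mpr (Nat.factorial_ne_zero _)
  have h3 : B ^ n ≠ 0 := pow_ne_zero _ hB.ne'
  rw [h, eq_div_iff (by positivity)]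
  field_simp

lemma key_le {n : ℕ} (hn : 1 ≤ n) {B lam t : ℝ} (hB : 0 < B) (hl : 0 < lam) (ht : 0 ≤ t) :
    0 ≤ lam ^ (-(n:ℤ)) * (gammaMeasure n (lam/B) (Iio t)).toReal
    ∧ lam ^ (-(n:ℤ)) * (gammaMeasure n (lam/B) (Iio t)).toReal ≤ t^n / (B^n * n.factorial) := by
  have hc : 0 < lam / B := div_pos hl hB
  obtain ⟨h0, h1, _⟩ := key_bounds hn hc ht
  have hcpos : (0:ℝ) < (B^n * (n-1).factorial)⁻¹ := by positivity
  rw [key_eq hn hB hl ht, ← limit_val hn hB]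
  exact ⟨mul_nonneg hcpos.le h0, mul_le_mul_of_nonneg_left h1 hcpos.le⟩

lemma key_tendsto {n : ℕ} (hn : 1 ≤ n) {B t : ℝ} (hB : 0 < B) (ht : 0 ≤ t) :
    Tendsto (fun lam : ℝ => lam ^ (-(n:ℤ)) * (gammaMeasure n (lam/B) (Iio t)).toReal)
      (nhdsWithin 0 (Ioi 0)) (𝓝 (t^n / (B^n * n.factorial))) := by
  rw [← tendsto_sub_nhds_zero_iff]
  have hg : Tendsto (fun lam : ℝ => lam * ((B^n * (n-1).factorial)⁻¹ / B * (t^(n+1)/(n+1))))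
      (nhdsWithin 0 (Ioi 0)) (𝓝 0) := by
    have : Tendsto (fun lam : ℝ => lam * ((B^n * (n-1).factorial)⁻¹ / B * (t^(n+1)/(n+1))))
        (𝓝 0) (𝓝 (0 * ((B^n * (n-1).factorial)⁻¹ / B * (t^(n+1)/(n+1))))) :=
      (continuous_id.mul continuous_const).tendsto 0
    rw [zero_mul] at this
    exact this.mono_left nhdsWithin_le_nhds
  refine squeeze_zero_norm' ?_ hg
  filter_upwards [self_mem_nhdsWithin] with lam (hl : lam ∈ Ioi 0)
  have hl : 0 < lam := hl
  have hc : 0 < lam / B := div_pos hl hB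
  obtain ⟨h0, h1, h2⟩ := key_bounds hn hc ht
  have hcpos : (0:ℝ) < (B^n * (n-1).factorial)⁻¹ := by positivity
  rw [key_eq hn hB hl ht, ← limit_val hn hB]
  rw [Real.norm_eq_abs, abs_of_nonpos (by nlinarith), ← mul_sub]
  have : (B^n * (n-1).factorial)⁻¹ * (t^n/n - ∫ y in Ico (0:ℝ) t, y ^ (n-1) * Real.exp (-(lam/B*y)))
      ≤ (B^n * (n-1).factorial)⁻¹ * (lam/B * (t^(n+1)/(n+1))) :=
    mul_le_mul_of_nonneg_left h2 hcpos.le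
  calc -((B^n * (n-1).factorial)⁻¹ * ((∫ y in Ico (0:ℝ) t, y ^ (n-1) * Real.exp (-(lam/B*y))) - t^n/n))
      = (B^n * (n-1).factorial)⁻¹ * (t^n/n - ∫ y in Ico (0:ℝ) t, y ^ (n-1) * Real.exp (-(lam/B*y))) := by ring
    _ ≤ (B^n * (n-1).factorial)⁻¹ * (lam/B * (t^(n+1)/(n+1))) := this
    _ = lam * ((B^n * (n-1).factorial)⁻¹ / B * (t^(n+1)/(n+1))) := by ring

lemma integral_shift (k : ℕ) {μ : ℝ} (hμ : 0 < μ) :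
    ∫ x in Ioi (0:ℝ), (x+1)^k * Real.exp (-(μ*x))
      = Real.exp μ * μ ^ (-(k+1:ℤ)) * upperGamma (k+1) μ := by
  have h1 : upperGamma (k+1) μ = ∫ t in Ioi μ, t^k * Real.exp (-t) := by
    unfold upperGamma
    norm_num
  have h2 := integral_comp_mul_left_Ioi (fun t => t^k * Real.exp (-t)) 1 hμ
  simp only [mul_one, smul_eq_mul] at h2
  -- h2 : ∫ x in Ioi 1, (μ*x)^k * exp (-(μ*x)) = μ⁻¹ * ∫ t in Ioi μ, t^k * exp (-t)
  have h3 : ∫ x in Ioi (0:ℝ), (μ*(x+1))^k * Real.exp (-(μ*(x+1)))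
      = ∫ s in Ioi (1:ℝ), (μ*s)^k * Real.exp (-(μ*s)) := by
    have hemb : MeasurableEmbedding (fun x : ℝ => x + 1) :=
      (MeasurableEquiv.addRight (1:ℝ)).measurableEmbedding
    have hpre : (fun x : ℝ => x + 1) ⁻¹' (Ioi 1) = Ioi 0 := by
      ext x; simp
    have := (measurePreserving_add_right volume (1:ℝ)).setIntegral_preimage_emb hemb
      (fun s => (μ*s)^k * Real.exp (-(μ*s))) (Ioi 1)
    rw [hpre] at this
    exact this
  have h4 : ∀ x : ℝ, (μ*(x+1))^k * Real.exp (-(μ*(x+1)))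
      = (μ^k * Real.exp (-μ)) * ((x+1)^k * Real.exp (-(μ*x))) := by
    intro x
    rw [mul_pow, show -(μ*(x+1)) = -(μ*x) + (-μ) by ring, Real.exp_add]
    ring
  have h5 : (μ^k * Real.exp (-μ)) * ∫ x in Ioi (0:ℝ), (x+1)^k * Real.exp (-(μ*x))
      = μ⁻¹ * ∫ t in Ioi μ, t^k * Real.exp (-t) := by
    rw [← MeasureTheory.integral_const_mul, ← h2, ← h3]
    exact setIntegral_congr_fun measurableSet_Ioi fun x _ => (h4 x).symm
  have hne : μ^k * Real.exp (-μ) ≠ 0 := by positivity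
  rw [h1]
  have := congrArg (fun z => (μ^k * Real.exp (-μ))⁻¹ * z) h5
  simp only [← mul_assoc, inv_mul_cancel₀ hne, one_mul] at this
  rw [this]
  rw [Real.exp_neg]
  have hz : μ ^ ((k:ℤ)+1) = μ ^ (k+1 : ℕ) := by
    rw [show ((k:ℤ)+1) = ((k+1:ℕ):ℤ) by push_cast; ring, zpow_natCast]
  rw [zpow_neg, hz, pow_succ]
  have h6 : Real.exp μ ≠ 0 := (Real.exp_pos μ).ne'
  field_simp

lemma integral_gammaMeasure {I : ℕ} (hI : 1 ≤ I) {μ : ℝ} (hμ : 0 < μ) (f : ℝ → ℝ) :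
    ∫ x, f x ∂(gammaMeasure I μ) = ∫ x in Ioi 0, gammaPDFReal I μ x * f x := by
  have hd : gammaPDF (I:ℝ) μ = fun x => ((gammaPDFReal I μ x).toNNReal : ℝ≥0∞) := rfl
  have hIpos : (0:ℝ) < I := by exact_mod_cast Nat.lt_of_lt_of_le Nat.zero_lt_one hI
  rw [gammaMeasure, hd, integral_withDensity_eq_integral_smul
    ((measurable_gammaPDFReal I μ).real_toNNReal) f]
  have hsm : (fun x => (gammaPDFReal I μ x).toNNReal • f x)
      = fun x => gammaPDFReal I μ x * f x := by
    funext x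
    rw [NNReal.smul_def, Real.coe_toNNReal _ (gammaPDFReal_nonneg hIpos hμ x), smul_eq_mul]
  rw [hsm, ← setIntegral_eq_integral_of_forall_compl_eq_zero
    (s := Ici 0) (fun x hx => by
      rw [gammaPDFReal, if_neg (by simpa using hx), zero_mul]),
    setIntegral_congr_set Ioi_ae_eq_Ici.symm]

lemma integrable_gammaMeasure_poly {I : ℕ} (N : ℕ) (hI : 1 ≤ I) {μ : ℝ} (hμ : 0 < μ) :
    Integrable (fun x : ℝ => (x+1)^N) (gammaMeasure I μ) := by
  have hd : gammaPDF (I:ℝ) μ = fun x => ((gammaPDFReal I μ x).toNNReal : ℝ≥0∞) := rfl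
  have hIpos : (0:ℝ) < I := by exact_mod_cast Nat.lt_of_lt_of_le Nat.zero_lt_one hI
  rw [gammaMeasure, hd, integrable_withDensity_iff_integrable_smul
    ((measurable_gammaPDFReal I μ).real_toNNReal)]
  have hsm : (fun x => (gammaPDFReal I μ x).toNNReal • (x+1:ℝ)^N)
      = fun x => gammaPDFReal I μ x * (x+1)^N := by
    funext x
    rw [NNReal.smul_def, Real.coe_toNNReal _ (gammaPDFReal_nonneg hIpos hμ x), smul_eq_mul]
  rw [hsm]
  have hind : (fun x : ℝ => gammaPDFReal I μ x * (x+1)^N)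
      = (Ici (0:ℝ)).indicator (fun x => gammaPDFReal I μ x * (x+1)^N) := by
    funext x
    by_cases hx : (0:ℝ) ≤ x
    · rw [indicator_of_mem (mem_Ici.mpr hx)]
    · rw [indicator_of_notMem (by simpa using hx), gammaPDFReal,
        if_neg hx, zero_mul]
  rw [hind, integrable_indicator_iff measurableSet_Ici]
  rw [IntegrableOn, Measure.restrict_congr_set Ioi_ae_eq_Ici.symm, ← IntegrableOn]
  have : IntegrableOn (fun x : ℝ =>
      μ ^ I / (I-1).factorial * (x ^ (I-1) * (x+1) ^ N * Real.exp (-(μ*x)))) (Ioi 0) :=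
    (integrableOn_pow_mul_pow_mul_exp (I-1) N hμ 0).const_mul _
  refine this.congr_fun (fun x hx => ?_) measurableSet_Ioi
  rw [gammaPDFReal_nat hI μ (le_of_lt hx)]
  ring

lemma gamma_moment_eq {I : ℕ} (N : ℕ) (hI : 1 ≤ I) {μ : ℝ} (hμ : 0 < μ) :
    ∫ x, (x+1:ℝ)^N ∂(gammaMeasure I μ)
      = (μ^I * Real.exp μ / (I-1).factorial) *
          ∑ g ∈ Finset.range I, ((I-1).choose g : ℝ) * (-1:ℝ)^(I-1-g) *
            μ ^ (-(g+N+1:ℤ)) * upperGamma (g+N+1) μ := by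
  rw [integral_gammaMeasure hI hμ]
  have hcongr : ∀ x ∈ Ioi (0:ℝ), gammaPDFReal I μ x * (x+1)^N
      = ∑ g ∈ Finset.range I, (μ^I / (I-1).factorial * (((I-1).choose g : ℝ) * (-1:ℝ)^(I-1-g)))
          * ((x+1)^(g+N) * Real.exp (-(μ*x))) := by
    intro x hx
    have hx0 : (0:ℝ) ≤ x := le_of_lt hx
    rw [gammaPDFReal_nat hI μ hx0]
    have hbin : x ^ (I-1) = ∑ g ∈ Finset.range I, (x+1)^g * (-1:ℝ)^(I-1-g) * ((I-1).choose g) := by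
      have := add_pow (x+1) (-1:ℝ) (I-1)
      rw [show (x+1) + (-1:ℝ) = x by ring, Nat.sub_add_cancel hI] at this
      exact this
    rw [hbin, Finset.mul_sum, Finset.sum_mul, Finset.sum_mul]
    refine Finset.sum_congr rfl fun g hg => ?_
    rw [pow_add]
    ring
  rw [setIntegral_congr_fun measurableSet_Ioi hcongr, integral_finset_sum _ (fun g hg =>
    ((integrableOn_pow_mul_pow_mul_exp 0 (g+N) hμ 0).congr_fun
      (fun x hx => by ring) measurableSet_Ioi).const_mul _)]
  rw [Finset.mul_sum]
  refine Finset.sum_congr rfl fun g hg => ?_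
  rw [MeasureTheory.integral_const_mul, integral_shift (g+N) hμ]
  have hc : ((g+N:ℕ)+1:ℤ) = (g:ℤ) + N + 1 := by push_cast; ring
  rw [hc]
  ring

/-- High-SNR asymptotic of the first-hop outage term (Eq. (11)):
if `X ~ Gamma(I, μ)` and, for each `λ > 0`, `W^{(λ)} ~ Gamma(N, λ/B)` is independent
of `X`, then `lim_{λ → 0+} λ^{-N} P(W^{(λ)} < u (X+1)) = (u^N/(B^N N!)) E[(X+1)^N]`,
and this limit equals
`(u^N/(B^N N!)) (μ^I e^μ/(I-1)!) Σ_{g=0}^{I-1} C(I-1,g) (-1)^{I-1-g} μ^{-(g+N+1)} Γ(g+N+1, μ)`. -/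
theorem high_snr_first_hop_outage
    {Ω : Type*} [MeasurableSpace Ω] (P : Measure Ω) [IsProbabilityMeasure P]
    (N : ℕ) (hN : 1 ≤ N) (I : ℕ) (hI : 1 ≤ I) (B μ u : ℝ) (hB : 0 < B) (hμ : 0 < μ) (hu : 0 < u)
    (X : Ω → ℝ) (hXmeas : Measurable X)
    (hXdist : Measure.map X P = gammaMeasure I μ)
    (W : ℝ → Ω → ℝ)
    (hWmeas : ∀ lam, 0 < lam → Measurable (W lam))
    (hWdist : ∀ lam, 0 < lam → Measure.map (W lam) P = gammaMeasure N (lam / B))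
    (hindep : ∀ lam, 0 < lam → IndepFun (W lam) X P) :
    Filter.Tendsto
      (fun lam : ℝ => lam ^ (-(N : ℤ)) * (P {ω | W lam ω < u * (X ω + 1)}).toReal)
      (nhdsWithin 0 (Set.Ioi 0))
      (nhds (u ^ N / (B ^ N * (Nat.factorial N : ℝ)) * ∫ ω, (X ω + 1) ^ N ∂P)) ∧
    u ^ N / (B ^ N * (Nat.factorial N : ℝ)) * ∫ ω, (X ω + 1) ^ N ∂P =
      u ^ N / (B ^ N * (Nat.factorial N : ℝ)) *
        (μ ^ I * Real.exp μ / (Nat.factorial (I - 1) : ℝ)) *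
          ∑ g ∈ Finset.range I, ((I - 1).choose g : ℝ) * (-1 : ℝ) ^ (I - 1 - g) *
            μ ^ (-(g + N + 1 : ℤ)) * upperGamma (g + N + 1) μ := by
  have hNpos : (0:ℝ) < N := by exact_mod_cast Nat.lt_of_lt_of_le Nat.zero_lt_one hN
  set ν : Measure ℝ := gammaMeasure I μ with hν
  have hXint : ∫ x, ((x:ℝ)+1)^N ∂ν = ∫ ω, (X ω + 1)^N ∂P := by
    rw [← hXdist, integral_map hXmeas.aemeasurable
      (Continuous.aestronglyMeasurable (by continuity))]
  have hae0 : ∀ᵐ x ∂ν, 0 ≤ x := by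
    rw [ae_iff]
    have hs : {x : ℝ | ¬ 0 ≤ x} = Iio 0 := by ext x; simp [not_le]
    rw [hs]
    show (gammaMeasure (I:ℝ) μ) (Iio 0) = 0
    rw [gammaMeasure, withDensity_apply _ measurableSet_Iio]
    exact lintegral_gammaPDF_of_nonpos le_rfl
  have hκmeas : ∀ lam : ℝ, Measurable fun x : ℝ => gammaMeasure N (lam/B) (Iio (u*(x+1))) :=
    fun lam => Monotone.measurable fun a b hab =>
      measure_mono (Iio_subset_Iio (by nlinarith))
  set φ : ℝ → ℝ → ℝ := fun lam x =>
    lam ^ (-(N:ℤ)) * (gammaMeasure N (lam/B) (Iio (u*(x+1)))).toReal with hφ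
  have hPS : ∀ lam : ℝ, 0 < lam →
      P {ω | W lam ω < u * (X ω + 1)}
        = ∫⁻ x, gammaMeasure N (lam/B) (Iio (u*(x+1))) ∂ν := by
    intro lam hl
    haveI := isProbabilityMeasure_gammaMeasure hNpos (div_pos hl hB)
    have hmap : Measure.map (fun ω => (X ω, W lam ω)) P = ν.prod (gammaMeasure N (lam/B)) := by
      rw [show ν.prod (gammaMeasure N (lam/B)) = (Measure.map X P).prod (Measure.map (W lam) P) by rw [hXdist, hWdist lam hl]]
      exact (indepFun_iff_map_prod_eq_prod_map_map hXmeas.aemeasurable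
        (hWmeas lam hl).aemeasurable).mp ((hindep lam hl).symm)
    have hTm : MeasurableSet {p : ℝ × ℝ | p.2 < u * (p.1 + 1)} :=
      measurableSet_lt measurable_snd (by fun_prop)
    have hset : {ω | W lam ω < u * (X ω + 1)}
        = (fun ω => (X ω, W lam ω)) ⁻¹' {p : ℝ × ℝ | p.2 < u * (p.1+1)} := rfl
    rw [hset, ← Measure.map_apply (hXmeas.prodMk (hWmeas lam hl)) hTm, hmap,
      Measure.prod_apply hTm]
    have hpre : ∀ x : ℝ, (Prod.mk x ⁻¹' {p : ℝ × ℝ | p.2 < u * (p.1+1)}) = Iio (u*(x+1)) :=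
      fun x => by ext w; simp [mem_Iio]
    exact lintegral_congr fun x => by rw [hpre x]
  have step1 : ∀ lam : ℝ, 0 < lam →
      lam ^ (-(N:ℤ)) * (P {ω | W lam ω < u * (X ω + 1)}).toReal = ∫ x, φ lam x ∂ν := by
    intro lam hl
    haveI := isProbabilityMeasure_gammaMeasure hNpos (div_pos hl hB)
    rw [hPS lam hl, ← integral_toReal (hκmeas lam).aemeasurable
      (ae_of_all _ fun x => measure_lt_top _ _), ← MeasureTheory.integral_const_mul]
  set f : ℝ → ℝ := fun x => u ^ N / (B ^ N * (N.factorial : ℝ)) * (x+1)^N with hf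
  have hbval : ∀ x : ℝ, 0 ≤ x → (u*(x+1))^N / (B^N * N.factorial) = f x := by
    intro x hx
    rw [hf, mul_pow]
    ring
  have hIntf : Integrable f ν := (integrable_gammaMeasure_poly N hI hμ).const_mul _
  have hDCT : Tendsto (fun lam => ∫ x, φ lam x ∂ν) (nhdsWithin 0 (Ioi 0)) (𝓝 (∫ x, f x ∂ν)) := by
    refine tendsto_integral_filter_of_dominated_convergence f ?_ ?_ hIntf ?_
    · refine eventually_nhdsWithin_of_forall fun lam hl => ?_
      exact ((ENNReal.measurable_toReal.comp (hκmeas lam)).const_mul _).aestronglyMeasurable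
    · refine eventually_nhdsWithin_of_forall fun lam (hl : (0:ℝ) < lam) => ?_
      filter_upwards [hae0] with x hx
      have ht : (0:ℝ) ≤ u*(x+1) := by nlinarith
      obtain ⟨h0, h1⟩ := key_le hN hB hl ht
      rw [Real.norm_eq_abs, abs_of_nonneg h0]
      rw [← hbval x hx]
      exact h1
    · filter_upwards [hae0] with x hx
      have ht : (0:ℝ) ≤ u*(x+1) := by nlinarith
      have := key_tendsto hN hB ht
      rwa [hbval x hx] at this
  have hfval : ∫ x, f x ∂ν = u ^ N / (B ^ N * (N.factorial : ℝ)) * ∫ x, ((x:ℝ)+1)^N ∂ν :=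
    MeasureTheory.integral_const_mul _ _
  have hmom : ∫ x, ((x:ℝ)+1)^N ∂ν
      = (μ^I * Real.exp μ / (I-1).factorial) *
          ∑ g ∈ Finset.range I, ((I-1).choose g : ℝ) * (-1:ℝ)^(I-1-g) *
            μ ^ (-(g+N+1:ℤ)) * upperGamma (g+N+1) μ := gamma_moment_eq N hI hμ
  constructor
  · rw [← hXint, ← hfval]
    refine Tendsto.congr' ?_ hDCT
    filter_upwards [self_mem_nhdsWithin] with lam (hl : (0:ℝ) < lam)
    exact (step1 lam hl).symm
  · rw [← hXint, hmom, ← mul_assoc]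
end

section
/- (Diversity order for N = 1.) Let K ≥ 1, I_r ≥ 1, I_d ≥ 1 be integers and μ_r, μ_d, u > 0. For each ρ > 0, on a probability space let W_1^{(ρ)}, …, W_K^{(ρ)} be i.i.d. exponential with rate 1/ρ, X_1, …, X_K i.i.d. Gamma(I_r, μ_r), V_1^{(ρ)}, …, V_K^{(ρ)} i.i.d. exponential with rate 1/ρ, and X_d distributed Gamma(I_d, μ_d), all mutually independent, and let P_out(ρ) = P( for every k with W_k^{(ρ)}/(X_k + 1) ≥ u, one has V_k^{(ρ)} < u (X_d + 1) ). Then lim_{ρ → ∞} ρ^K P_out(ρ) = u^K Σ_{L=0}^{K} C(K, L) (E[X_1 + 1])^{K-L} E[(X_d + 1)^L]; in particular the limit is a finite positive constant, so the outage probability decays as ρ^{-K} (diversity order K). -/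
open MeasureTheory ProbabilityTheory Real Set Filter Topology


-- basic bound: for s ≥ 0, 1 - exp (-s) ≤ s
lemma one_sub_exp_neg_le {s : ℝ} : 1 - Real.exp (-s) ≤ s := by
  nlinarith [Real.add_one_le_exp (-s)]

lemma mul_one_sub_exp_le {a ρ : ℝ} (hρ : 0 < ρ) (ha : 0 ≤ a) :
    ρ * (1 - Real.exp (-(a / ρ))) ≤ a := by
  have h := one_sub_exp_neg_le (s := a / ρ)
  calc ρ * (1 - Real.exp (-(a / ρ))) ≤ ρ * (a / ρ) := by
        apply mul_le_mul_of_nonneg_left h hρ.le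
    _ = a := by field_simp

lemma mul_one_sub_exp_nonneg {a ρ : ℝ} (hρ : 0 < ρ) (ha : 0 ≤ a) :
    0 ≤ ρ * (1 - Real.exp (-(a / ρ))) := by
  have : Real.exp (-(a / ρ)) ≤ 1 := by
    rw [Real.exp_le_one_iff]
    simp only [Left.neg_nonpos_iff]
    positivity
  nlinarith

lemma tendsto_mul_one_sub_exp {a : ℝ} (ha : 0 ≤ a) :
    Tendsto (fun ρ : ℝ => ρ * (1 - Real.exp (-(a / ρ)))) atTop (𝓝 a) := by
  rcases eq_or_lt_of_le ha with h | h
  · simp [← h]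
  · -- use slope of f t = 1 - exp (-t) at 0
    have hd : HasDerivAt (fun t : ℝ => 1 - Real.exp (-t)) 1 0 := by
      have h1 : HasDerivAt (fun t : ℝ => Real.exp (-t)) (-1) 0 := by
        simpa [Function.comp_def] using ((Real.hasDerivAt_exp (-0)).comp 0 (hasDerivAt_neg 0))
      simpa [Pi.sub_def] using (hasDerivAt_const 0 (1:ℝ)).sub h1
    have hslope : Tendsto (fun t : ℝ => (1 - Real.exp (-t)) / t) (𝓝[≠] 0) (𝓝 1) := by
      have := hasDerivAt_iff_tendsto_slope.mp hd
      refine this.congr' ?_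
      filter_upwards [self_mem_nhdsWithin] with t ht
      simp [slope_def_field, div_eq_inv_mul]
    have hcomp : Tendsto (fun ρ : ℝ => a / ρ) atTop (𝓝[≠] 0) := by
      apply tendsto_nhdsWithin_of_tendsto_nhds_of_eventually_within
      · exact tendsto_const_nhds.div_atTop tendsto_id
      · filter_upwards [eventually_gt_atTop 0] with ρ hρ
        simp only [mem_compl_iff, mem_singleton_iff]
        positivity
    have := (hslope.comp hcomp).const_mul a
    rw [mul_one] at this
    refine this.congr' ?_
    filter_upwards [eventually_gt_atTop 0] with ρ hρ
    simp only [Function.comp_apply]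
    field_simp


lemma add_one_pow_le_helper {x : ℝ} (hx : 0 ≤ x) (L : ℕ) :
    (x + 1) ^ L ≤ 2 ^ L * (1 + x ^ L) := by
  rcases le_total x 1 with h | h
  · calc (x + 1) ^ L ≤ 2 ^ L := by
          apply pow_le_pow_left₀ (by linarith) (by linarith)
      _ ≤ 2 ^ L * (1 + x ^ L) := by
          nlinarith [pow_nonneg hx L, pow_nonneg (by norm_num : (0:ℝ) ≤ 2) L]
  · calc (x + 1) ^ L ≤ (2 * x) ^ L := by
          apply pow_le_pow_left₀ (by linarith) (by linarith)
      _ = 2 ^ L * x ^ L := by rw [mul_pow]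
      _ ≤ 2 ^ L * (1 + x ^ L) := by
          nlinarith [pow_nonneg (by norm_num : (0:ℝ) ≤ 2) L]

lemma ae_nonneg_gammaMeasure {a r : ℝ} : ∀ᵐ x ∂(gammaMeasure a r), 0 ≤ x := by
  rw [ae_iff]
  have : {x : ℝ | ¬ 0 ≤ x} = Iio 0 := by ext x; simp
  rw [this, gammaMeasure, withDensity_apply _ measurableSet_Iio]
  exact lintegral_gammaPDF_of_nonpos le_rfl

lemma integrable_pow_gammaMeasure {a r : ℝ} (ha : 0 < a) (hr : 0 < r) (L : ℕ) :
    Integrable (fun x => (x + 1) ^ L) (gammaMeasure a r) := by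
  have hpdf_def : gammaPDF a r = fun x => ENNReal.ofReal (gammaPDFReal a r x) := rfl
  rw [gammaMeasure, hpdf_def, integrable_withDensity_iff (measurable_gammaPDFReal a r).ennreal_ofReal
    (Filter.Eventually.of_forall fun x => ENNReal.ofReal_lt_top)]
  have htoReal : ∀ x, (ENNReal.ofReal (gammaPDFReal a r x)).toReal = gammaPDFReal a r x :=
    fun x => ENNReal.toReal_ofReal (gammaPDFReal_nonneg ha hr x)
  simp only [htoReal]
  have h1 : IntegrableOn (fun x : ℝ => x ^ (a - 1) * Real.exp (-r * x)) (Ioi 0) := by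
    have := integrableOn_rpow_mul_exp_neg_mul_rpow (s := a - 1) (p := 1) (b := r)
      (by linarith) zero_lt_one hr
    simpa [Real.rpow_one] using this
  have h2 : IntegrableOn (fun x : ℝ => x ^ ((L : ℝ) + a - 1) * Real.exp (-r * x)) (Ioi 0) := by
    have := integrableOn_rpow_mul_exp_neg_mul_rpow (s := (L : ℝ) + a - 1) (p := 1) (b := r)
      (by push_cast; linarith [show (0:ℝ) ≤ L from Nat.cast_nonneg L]) zero_lt_one hr
    simpa [Real.rpow_one] using this
  have hmeas : AEStronglyMeasurable (fun x => (x + 1) ^ L * gammaPDFReal a r x) volume :=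
    ((measurable_id.add_const 1).pow_const L).mul (measurable_gammaPDFReal a r)
      |>.aestronglyMeasurable
  rw [← integrableOn_univ, ← Iio_union_Ici (a := (0:ℝ))]
  apply IntegrableOn.union
  · apply (integrableOn_congr_fun ?_ measurableSet_Iio).mpr (integrableOn_zero)
    intro x hx
    simp only [gammaPDFReal, if_neg (not_le.mpr (mem_Iio.mp hx)), mul_zero]
  · rw [integrableOn_Ici_iff_integrableOn_Ioi]
    set C := r ^ a / Real.Gamma a with hC
    have hCpos : 0 < C := by
      apply div_pos (Real.rpow_pos_of_pos hr a) (Real.Gamma_pos_of_pos ha)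
    apply Integrable.mono' (((h1.add h2).const_mul (C * 2 ^ L)))
      (hmeas.restrict)
    filter_upwards [ae_restrict_mem measurableSet_Ioi] with x hx
    have hx0 : 0 < x := hx
    have hpdf : gammaPDFReal a r x = C * (x ^ (a - 1) * Real.exp (-r * x)) := by
      rw [gammaPDFReal, if_pos hx0.le, hC, neg_mul]
      ring
    have hb : (x + 1) ^ L ≤ 2 ^ L * (1 + x ^ L) := add_one_pow_le_helper hx0.le L
    have hxL : x ^ L * x ^ (a - 1) = x ^ ((L : ℝ) + a - 1) := by
      rw [← Real.rpow_natCast x L, ← Real.rpow_add hx0]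
      ring_nf
    have hnn : 0 ≤ x ^ (a - 1) * Real.exp (-r * x) :=
      mul_nonneg (Real.rpow_nonneg hx0.le _) (Real.exp_pos _).le
    rw [Real.norm_eq_abs, abs_of_nonneg (mul_nonneg (pow_nonneg (by linarith) L)
      (gammaPDFReal_nonneg ha hr x))]
    rw [hpdf]
    calc (x + 1) ^ L * (C * (x ^ (a - 1) * Real.exp (-r * x)))
        ≤ (2 ^ L * (1 + x ^ L)) * (C * (x ^ (a - 1) * Real.exp (-r * x))) := by
          apply mul_le_mul_of_nonneg_right hb (mul_nonneg hCpos.le hnn)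
      _ = C * 2 ^ L * ((x ^ (a - 1) * Real.exp (-r * x))
            + x ^ ((L : ℝ) + a - 1) * Real.exp (-r * x)) := by
          rw [← hxL]; ring


lemma expMeasure_Iic {r t : ℝ} (hr : 0 < r) :
    expMeasure r (Iic t) = ENNReal.ofReal (if 0 ≤ t then 1 - Real.exp (-(r * t)) else 0) := by
  rw [expMeasure, gammaMeasure, withDensity_apply _ measurableSet_Iic]
  exact lintegral_exponentialPDF_eq_antiDeriv hr t

lemma expMeasure_singleton {r t : ℝ} : expMeasure r {t} = 0 := by
  rw [expMeasure, gammaMeasure, withDensity_apply _ (measurableSet_singleton t)]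
  exact setLIntegral_measure_zero _ _ (measure_singleton t)

lemma expMeasure_Ici {r t : ℝ} (hr : 0 < r) (ht : 0 ≤ t) :
    expMeasure r (Ici t) = ENNReal.ofReal (Real.exp (-(r * t))) := by
  haveI := isProbabilityMeasure_expMeasure hr
  have hIio : expMeasure r (Iio t) = ENNReal.ofReal (1 - Real.exp (-(r * t))) := by
    have h1 : Iio t ∪ {t} = Iic t := Iio_union_right
    have h2 : expMeasure r (Iio t ∪ {t}) = expMeasure r (Iio t) + expMeasure r {t} :=
      measure_union (by simp) (measurableSet_singleton t)
    rw [h1, expMeasure_Iic hr, if_pos ht] at h2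
    rw [expMeasure_singleton, add_zero] at h2
    exact h2.symm
  have hcompl : Ici t = (Iio t)ᶜ := by simp
  rw [hcompl, measure_compl measurableSet_Iio (measure_ne_top _ _), hIio, measure_univ]
  have hle : Real.exp (-(r * t)) ≤ 1 := Real.exp_le_one_iff.mpr (by nlinarith)
  rw [← ENNReal.ofReal_one, ← ENNReal.ofReal_sub _ (by linarith)]
  norm_num


section blocks
variable {Ω : Type*} [MeasurableSpace Ω] {P : Measure Ω} [IsProbabilityMeasure P] {K : ℕ}
  {W X V : Fin K → Ω → ℝ} {Xd : Ω → ℝ}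

lemma blocks_prod
    (h : iIndepFun
      (Sum.elim (Sum.elim W X) (Sum.elim V (fun _ : Unit => Xd))) P)
    (hWm : ∀ k, Measurable (W k)) (hXm : ∀ k, Measurable (X k)) (hVm : ∀ k, Measurable (V k))
    (hXdm : Measurable Xd)
    (s : Fin K → Set (ℝ × ℝ × ℝ)) (hs : ∀ k, MeasurableSet (s k)) :
    P (⋂ k, (fun ω => (W k ω, X k ω, V k ω)) ⁻¹' s k)
      = ∏ k, P ((fun ω => (W k ω, X k ω, V k ω)) ⁻¹' s k) := by
  classical
  have hfm : ∀ i, Measurable (Sum.elim (Sum.elim W X) (Sum.elim V (fun _ : Unit => Xd)) i) := by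
    rintro ((k | k) | (k | ⟨⟩))
    · exact hWm k
    · exact hXm k
    · exact hVm k
    · exact hXdm
  have key : ∀ T : Finset (Fin K),
      P (⋂ k ∈ T, (fun ω => (W k ω, X k ω, V k ω)) ⁻¹' s k)
        = ∏ k ∈ T, P ((fun ω => (W k ω, X k ω, V k ω)) ⁻¹' s k) := by
    intro T
    induction T using Finset.induction with
    | empty => simp
    | @insert j T hj ih =>
      have hdisj : Disjoint
          ({Sum.inl (Sum.inl j), Sum.inl (Sum.inr j), Sum.inr (Sum.inl j)} :
            Finset ((Fin K ⊕ Fin K) ⊕ (Fin K ⊕ Unit)))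
          (T.biUnion fun k =>
            {Sum.inl (Sum.inl k), Sum.inl (Sum.inr k), Sum.inr (Sum.inl k)}) := by
        rw [Finset.disjoint_left]
        intro a haj haT
        rcases Finset.mem_biUnion.mp haT with ⟨k, hkT, hk⟩
        have hkj : k ≠ j := fun hkj => hj (hkj ▸ hkT)
        simp only [Finset.mem_insert, Finset.mem_singleton] at haj hk
        rcases haj with rfl | rfl | rfl <;> rcases hk with hk | hk | hk <;>
          first
            | (exact absurd rfl (by simp_all))
            | (exact hkj.symm (by simpa using hk))
            | (simp at hk)
            | (exact absurd hk (by simp))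
      have hIndep2 := h.indepFun_finset _ _ hdisj hfm
      have hmemj1 : Sum.inl (Sum.inl j) ∈
          ({Sum.inl (Sum.inl j), Sum.inl (Sum.inr j), Sum.inr (Sum.inl j)} :
            Finset ((Fin K ⊕ Fin K) ⊕ (Fin K ⊕ Unit))) := by simp
      have hmemj2 : Sum.inl (Sum.inr j) ∈
          ({Sum.inl (Sum.inl j), Sum.inl (Sum.inr j), Sum.inr (Sum.inl j)} :
            Finset ((Fin K ⊕ Fin K) ⊕ (Fin K ⊕ Unit))) := by simp
      have hmemj3 : Sum.inr (Sum.inl j) ∈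
          ({Sum.inl (Sum.inl j), Sum.inl (Sum.inr j), Sum.inr (Sum.inl j)} :
            Finset ((Fin K ⊕ Fin K) ⊕ (Fin K ⊕ Unit))) := by simp
      have hmemT1 : ∀ k : {x // x ∈ T}, Sum.inl (Sum.inl k.1) ∈
          T.biUnion (fun k : Fin K =>
            ({Sum.inl (Sum.inl k), Sum.inl (Sum.inr k), Sum.inr (Sum.inl k)} :
              Finset ((Fin K ⊕ Fin K) ⊕ (Fin K ⊕ Unit)))) := fun k =>
        Finset.mem_biUnion.mpr ⟨k.1, k.2, by simp⟩
      have hmemT2 : ∀ k : {x // x ∈ T}, Sum.inl (Sum.inr k.1) ∈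
          T.biUnion (fun k : Fin K =>
            ({Sum.inl (Sum.inl k), Sum.inl (Sum.inr k), Sum.inr (Sum.inl k)} :
              Finset ((Fin K ⊕ Fin K) ⊕ (Fin K ⊕ Unit)))) := fun k =>
        Finset.mem_biUnion.mpr ⟨k.1, k.2, by simp⟩
      have hmemT3 : ∀ k : {x // x ∈ T}, Sum.inr (Sum.inl k.1) ∈
          T.biUnion (fun k : Fin K =>
            ({Sum.inl (Sum.inl k), Sum.inl (Sum.inr k), Sum.inr (Sum.inl k)} :
              Finset ((Fin K ⊕ Fin K) ⊕ (Fin K ⊕ Unit)))) := fun k =>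
        Finset.mem_biUnion.mpr ⟨k.1, k.2, by simp⟩
      have hcomapj : MeasurableSet[MeasurableSpace.comap
          (fun ω (i : ({Sum.inl (Sum.inl j), Sum.inl (Sum.inr j), Sum.inr (Sum.inl j)} :
            Finset ((Fin K ⊕ Fin K) ⊕ (Fin K ⊕ Unit)))) =>
              Sum.elim (Sum.elim W X) (Sum.elim V (fun _ : Unit => Xd)) i ω)
          MeasurableSpace.pi] ((fun ω => (W j ω, X j ω, V j ω)) ⁻¹' s j) := by
        refine ⟨(fun g => (g ⟨_, hmemj1⟩, g ⟨_, hmemj2⟩, g ⟨_, hmemj3⟩)) ⁻¹' s j, ?_, rfl⟩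
        exact ((measurable_pi_apply _).prodMk
          ((measurable_pi_apply _).prodMk (measurable_pi_apply _))) (hs j)
      have hcomapT : MeasurableSet[MeasurableSpace.comap
          (fun ω (i : (T.biUnion fun k : Fin K =>
            ({Sum.inl (Sum.inl k), Sum.inl (Sum.inr k), Sum.inr (Sum.inl k)} :
              Finset ((Fin K ⊕ Fin K) ⊕ (Fin K ⊕ Unit))))) =>
              Sum.elim (Sum.elim W X) (Sum.elim V (fun _ : Unit => Xd)) i ω)
          MeasurableSpace.pi]
          (⋂ k ∈ T, (fun ω => (W k ω, X k ω, V k ω)) ⁻¹' s k) := by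
        refine ⟨⋂ k : {x // x ∈ T}, (fun g =>
          (g ⟨_, hmemT1 k⟩, g ⟨_, hmemT2 k⟩, g ⟨_, hmemT3 k⟩)) ⁻¹' s k.1, ?_, ?_⟩
        · exact MeasurableSet.iInter fun k => ((measurable_pi_apply _).prodMk
            ((measurable_pi_apply _).prodMk (measurable_pi_apply _))) (hs k.1)
        · rw [Set.preimage_iInter]
          ext ω
          simp only [Set.mem_iInter, Set.mem_preimage, Subtype.forall]
          rfl
      have hinter := hIndep2.meas_inter hcomapj hcomapT
      rw [Finset.set_biInter_insert, Finset.prod_insert hj, hinter, ih]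
  have := key Finset.univ
  simpa using this
end blocks



lemma prob_ek {Ω : Type*} [MeasurableSpace Ω] {P : Measure Ω} [IsProbabilityMeasure P] {K : ℕ}
    {W X V : Fin K → Ω → ℝ} {Xd : Ω → ℝ}
    (h : iIndepFun
      (Sum.elim (Sum.elim W X) (Sum.elim V (fun _ : Unit => Xd))) P)
    (hWm : ∀ k, Measurable (W k)) (hXm : ∀ k, Measurable (X k)) (hVm : ∀ k, Measurable (V k))
    (hXdm : Measurable Xd)
    {u ρ a r : ℝ} (hu : 0 < u) (hρ : 0 < ρ) (ha : 0 < a) (hr : 0 < r)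
    (hW : ∀ k, Measure.map (W k) P = expMeasure (1/ρ))
    (hX : ∀ k, Measure.map (X k) P = gammaMeasure a r)
    (hV : ∀ k, Measure.map (V k) P = expMeasure (1/ρ))
    (k : Fin K) {b : ℝ} (hb : 0 ≤ b) :
    P ((fun ω => (W k ω, X k ω, V k ω)) ⁻¹' {t : ℝ × ℝ × ℝ | u ≤ t.1 / (t.2.1 + 1) → t.2.2 < b})
      = 1 - (∫⁻ x, ENNReal.ofReal (Real.exp (-(u * (x + 1) / ρ))) ∂(gammaMeasure a r))
          * ENNReal.ofReal (Real.exp (-(b / ρ))) := by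
  haveI : IsProbabilityMeasure (gammaMeasure a r) := isProbabilityMeasure_gammaMeasure ha hr
  haveI : IsProbabilityMeasure (expMeasure (1/ρ)) :=
    isProbabilityMeasure_expMeasure (by positivity)
  have hfm : ∀ i, Measurable (Sum.elim (Sum.elim W X) (Sum.elim V (fun _ : Unit => Xd)) i) := by
    rintro ((k | k) | (k | ⟨⟩))
    · exact hWm k
    · exact hXm k
    · exact hVm k
    · exact hXdm
  set sD : Set (ℝ × ℝ) := {p | u ≤ p.1 / (p.2 + 1)} with hsD_def
  have hsD : MeasurableSet sD :=
    measurableSet_le measurable_const (measurable_fst.div (measurable_snd.add_const 1))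
  set D : Set Ω := (fun ω => (W k ω, X k ω)) ⁻¹' sD with hD_def
  set B : Set Ω := V k ⁻¹' Ici b with hB_def
  have hDm : MeasurableSet D := ((hWm k).prodMk (hXm k)) hsD
  have hBm : MeasurableSet B := (hVm k) measurableSet_Ici
  -- the event is the complement of D ∩ B
  have hset : (fun ω => (W k ω, X k ω, V k ω)) ⁻¹'
      {t : ℝ × ℝ × ℝ | u ≤ t.1 / (t.2.1 + 1) → t.2.2 < b} = (D ∩ B)ᶜ := by
    ext ω
    simp only [Set.mem_preimage, Set.mem_setOf_eq, Set.mem_compl_iff, Set.mem_inter_iff,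
      hD_def, hB_def, hsD_def, Set.mem_Ici, not_and, not_le]
  rw [hset, prob_compl_eq_one_sub (hDm.inter hBm)]
  -- independence of (W k, X k) and V k
  have hpair : IndepFun (fun ω => (W k ω, X k ω)) (V k) P :=
    h.indepFun_prodMk hfm (Sum.inl (Sum.inl k)) (Sum.inl (Sum.inr k)) (Sum.inr (Sum.inl k))
      (by simp) (by simp)
  have hDB : P (D ∩ B) = P D * P B :=
    hpair.meas_inter ⟨sD, hsD, rfl⟩ ⟨Ici b, measurableSet_Ici, rfl⟩
  -- P B
  have hPB : P B = ENNReal.ofReal (Real.exp (-(b / ρ))) := by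
    rw [hB_def, ← Measure.map_apply (hVm k) measurableSet_Ici, hV k,
      expMeasure_Ici (by positivity) hb]
    congr 1
    rw [one_div, inv_mul_eq_div]
  -- P D
  have hPD : P D = ∫⁻ x, ENNReal.ofReal (Real.exp (-(u * (x + 1) / ρ))) ∂(gammaMeasure a r) := by
    have hWX : IndepFun (W k) (X k) P := h.indepFun (by simp : Sum.inl (Sum.inl k) ≠
      Sum.inl (Sum.inr k))
    have hmap : Measure.map (fun ω => (W k ω, X k ω)) P
        = (Measure.map (W k) P).prod (Measure.map (X k) P) :=
      (indepFun_iff_map_prod_eq_prod_map_map (hWm k).aemeasurable (hXm k).aemeasurable).mp hWX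
    rw [hD_def, ← Measure.map_apply ((hWm k).prodMk (hXm k)) hsD, hmap, hW k, hX k,
      Measure.prod_apply_symm hsD]
    apply lintegral_congr_ae
    filter_upwards [ae_nonneg_gammaMeasure] with x hx
    have hsec : (fun w => (w, x)) ⁻¹' sD = Ici (u * (x + 1)) := by
      ext w
      simp only [Set.mem_preimage, hsD_def, Set.mem_setOf_eq, Set.mem_Ici]
      rw [le_div_iff₀ (by linarith : (0:ℝ) < x + 1)]
    rw [hsec, expMeasure_Ici (by positivity) (by positivity)]
    congr 1
    field_simp
  rw [hDB, hPB, hPD]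


lemma meas_sk (u b : ℝ) :
    MeasurableSet {t : ℝ × ℝ × ℝ | u ≤ t.1 / (t.2.1 + 1) → t.2.2 < b} := by
  have : {t : ℝ × ℝ × ℝ | u ≤ t.1 / (t.2.1 + 1) → t.2.2 < b}
      = {t : ℝ × ℝ × ℝ | u ≤ t.1 / (t.2.1 + 1)}ᶜ ∪ {t : ℝ × ℝ × ℝ | t.2.2 < b} := by
    ext t; simp [imp_iff_not_or]
  rw [this]
  exact ((measurableSet_le measurable_const
    (measurable_fst.div ((measurable_fst.comp measurable_snd).add_const 1))).compl).union
    (measurableSet_lt (measurable_snd.comp measurable_snd) measurable_const)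

section main
variable {Ω : Type*} [MeasurableSpace Ω] {P : Measure Ω} [IsProbabilityMeasure P] {K : ℕ}
  {W X V : Fin K → Ω → ℝ} {Xd : Ω → ℝ}


lemma Pout_eq
    (h : iIndepFun
      (Sum.elim (Sum.elim W X) (Sum.elim V (fun _ : Unit => Xd))) P)
    (hWm : ∀ k, Measurable (W k)) (hXm : ∀ k, Measurable (X k)) (hVm : ∀ k, Measurable (V k))
    (hXdm : Measurable Xd)
    {u ρ a r ad rd : ℝ} (hu : 0 < u) (hρ : 0 < ρ) (ha : 0 < a) (hr : 0 < r)
    (had : 0 < ad) (hrd : 0 < rd)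
    (hW : ∀ k, Measure.map (W k) P = expMeasure (1/ρ))
    (hX : ∀ k, Measure.map (X k) P = gammaMeasure a r)
    (hV : ∀ k, Measure.map (V k) P = expMeasure (1/ρ))
    (hXd : Measure.map Xd P = gammaMeasure ad rd) :
    P {ω | ∀ k, u ≤ W k ω / (X k ω + 1) → V k ω < u * (Xd ω + 1)}
      = ∫⁻ y, (1 - (∫⁻ x, ENNReal.ofReal (Real.exp (-(u * (x + 1) / ρ))) ∂(gammaMeasure a r))
          * ENNReal.ofReal (Real.exp (-(u * (y + 1) / ρ)))) ^ K ∂(gammaMeasure ad rd) := by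
  classical
  haveI : IsProbabilityMeasure (gammaMeasure ad rd) := isProbabilityMeasure_gammaMeasure had hrd
  have hfm : ∀ i, Measurable (Sum.elim (Sum.elim W X) (Sum.elim V (fun _ : Unit => Xd)) i) := by
    rintro ((k | k) | (k | ⟨⟩))
    · exact hWm k
    · exact hXm k
    · exact hVm k
    · exact hXdm
  set η : Ω → (Fin K → ℝ) × (Fin K → ℝ) × (Fin K → ℝ) :=
    fun ω => (fun k => W k ω, fun k => X k ω, fun k => V k ω) with hη_def
  have hηm : Measurable η :=
    (measurable_pi_lambda _ fun k => hWm k).prodMk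
      ((measurable_pi_lambda _ fun k => hXm k).prodMk
        (measurable_pi_lambda _ fun k => hVm k))
  haveI : IsProbabilityMeasure (Measure.map η P) := Measure.isProbabilityMeasure_map hηm.aemeasurable
  -- independence of Xd and η
  have hIndep : IndepFun Xd η P := by
    have hdisj : Disjoint ({Sum.inr (Sum.inr ())} :
        Finset ((Fin K ⊕ Fin K) ⊕ (Fin K ⊕ Unit)))
        (Finset.univ.filter (fun i => i ≠ Sum.inr (Sum.inr ()))) := by
      rw [Finset.disjoint_left]
      intro i hi hi'
      simp only [Finset.mem_singleton] at hi
      simp [hi] at hi'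
    have base := h.indepFun_finset _ _ hdisj hfm
    have hbase := base.comp
      (show Measurable (fun g : ({Sum.inr (Sum.inr ())} :
          Finset ((Fin K ⊕ Fin K) ⊕ (Fin K ⊕ Unit))) → ℝ =>
        g ⟨Sum.inr (Sum.inr ()), by simp⟩) from measurable_pi_apply _)
      (show Measurable (fun g : (Finset.univ.filter
          (fun i : (Fin K ⊕ Fin K) ⊕ (Fin K ⊕ Unit) => i ≠ Sum.inr (Sum.inr ()))) → ℝ =>
        ((fun k => g ⟨Sum.inl (Sum.inl k), by simp⟩, fun k => g ⟨Sum.inl (Sum.inr k), by simp⟩,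
          fun k => g ⟨Sum.inr (Sum.inl k), by simp⟩) :
            (Fin K → ℝ) × (Fin K → ℝ) × (Fin K → ℝ))) from
        (measurable_pi_lambda _ fun k => measurable_pi_apply _).prodMk
          ((measurable_pi_lambda _ fun k => measurable_pi_apply _).prodMk
            (measurable_pi_lambda _ fun k => measurable_pi_apply _)))
    exact hbase
  set C : Set (ℝ × ((Fin K → ℝ) × (Fin K → ℝ) × (Fin K → ℝ))) :=
    {p | ∀ k, u ≤ p.2.1 k / (p.2.2.1 k + 1) → p.2.2.2 k < u * (p.1 + 1)} with hC_def
  have hC : MeasurableSet C := by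
    have : C = ⋂ k, ({p : ℝ × ((Fin K → ℝ) × (Fin K → ℝ) × (Fin K → ℝ)) |
        u ≤ p.2.1 k / (p.2.2.1 k + 1)}ᶜ ∪ {p | p.2.2.2 k < u * (p.1 + 1)}) := by
      ext p; simp [hC_def, imp_iff_not_or]
    rw [this]
    refine MeasurableSet.iInter fun k => MeasurableSet.union ?_ ?_
    · exact (measurableSet_le measurable_const
        (((measurable_pi_apply k).comp (measurable_fst.comp measurable_snd)).div
          ((((measurable_pi_apply k).comp
            (measurable_fst.comp (measurable_snd.comp measurable_snd)))).add_const 1))).compl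
    · exact measurableSet_lt
        (by fun_prop : Measurable fun p : ℝ × ((Fin K → ℝ) × (Fin K → ℝ) × (Fin K → ℝ)) =>
          p.2.2.2 k)
        (measurable_const.mul (measurable_fst.add_const 1))
  have hpre : {ω | ∀ k, u ≤ W k ω / (X k ω + 1) → V k ω < u * (Xd ω + 1)}
      = (fun ω => (Xd ω, η ω)) ⁻¹' C := rfl
  rw [hpre, ← Measure.map_apply (hXdm.prodMk hηm) hC,
    (indepFun_iff_map_prod_eq_prod_map_map hXdm.aemeasurable hηm.aemeasurable).mp hIndep,
    hXd, Measure.prod_apply hC]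
  apply lintegral_congr_ae
  filter_upwards [ae_nonneg_gammaMeasure] with y hy
  have hb : 0 ≤ u * (y + 1) := by positivity
  have hsec : Prod.mk y ⁻¹' C = ⋂ k, (fun t : (Fin K → ℝ) × (Fin K → ℝ) × (Fin K → ℝ) =>
      (t.1 k, t.2.1 k, t.2.2 k)) ⁻¹' {t : ℝ × ℝ × ℝ | u ≤ t.1 / (t.2.1 + 1) → t.2.2 < u * (y + 1)} := by
    ext t; simp [hC_def, Set.mem_iInter]
  rw [Measure.map_apply hηm (measurable_prodMk_left hC), hsec]
  have hηpre : η ⁻¹' (⋂ k, (fun t : (Fin K → ℝ) × (Fin K → ℝ) × (Fin K → ℝ) =>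
      (t.1 k, t.2.1 k, t.2.2 k)) ⁻¹'
        {t : ℝ × ℝ × ℝ | u ≤ t.1 / (t.2.1 + 1) → t.2.2 < u * (y + 1)})
      = ⋂ k, (fun ω => (W k ω, X k ω, V k ω)) ⁻¹'
        {t : ℝ × ℝ × ℝ | u ≤ t.1 / (t.2.1 + 1) → t.2.2 < u * (y + 1)} := by
    rw [Set.preimage_iInter]
    rfl
  rw [hηpre, blocks_prod h hWm hXm hVm hXdm _ (fun k => meas_sk u (u * (y + 1)))]
  have := fun k : Fin K => prob_ek h hWm hXm hVm hXdm hu hρ ha hr hW hX hV k hb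
  simp only [this]
  rw [Finset.prod_const, Finset.card_univ, Fintype.card_fin]
end main


/-- Diversity order for `N = 1`: with all intended channels exponential with rate
`1/ρ`, relay interference `X_k ~ Gamma(I_r, μ_r)`, destination interference
`X_d ~ Gamma(I_d, μ_d)`, all mutually independent, the outage probability satisfies
`lim_{ρ→∞} ρ^K P_out(ρ) = u^K Σ_{L=0}^{K} C(K,L) (E[X_1+1])^{K-L} E[(X_d+1)^L]`,
a finite positive constant, so the diversity order is `K`. -/
theorem diversity_order_N_eq_one
    {Ω : Type*} [MeasurableSpace Ω] (P : Measure Ω) [IsProbabilityMeasure P]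
    (K : ℕ) (hK : 1 ≤ K) (Ir : ℕ) (hIr : 1 ≤ Ir) (Id' : ℕ) (hId : 1 ≤ Id')
    (μr μd u : ℝ) (hμr : 0 < μr) (hμd : 0 < μd) (hu : 0 < u)
    (W V : ℝ → Fin K → Ω → ℝ) (X : ℝ → Fin K → Ω → ℝ) (Xd : ℝ → Ω → ℝ)
    (hWmeas : ∀ ρ, 0 < ρ → ∀ k, Measurable (W ρ k))
    (hXmeas : ∀ ρ, 0 < ρ → ∀ k, Measurable (X ρ k))
    (hVmeas : ∀ ρ, 0 < ρ → ∀ k, Measurable (V ρ k))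
    (hXdmeas : ∀ ρ, 0 < ρ → Measurable (Xd ρ))
    (hWdist : ∀ ρ, 0 < ρ → ∀ k, Measure.map (W ρ k) P = expMeasure (1 / ρ))
    (hXdist : ∀ ρ, 0 < ρ → ∀ k, Measure.map (X ρ k) P = gammaMeasure Ir μr)
    (hVdist : ∀ ρ, 0 < ρ → ∀ k, Measure.map (V ρ k) P = expMeasure (1 / ρ))
    (hXddist : ∀ ρ, 0 < ρ → Measure.map (Xd ρ) P = gammaMeasure Id' μd)
    (hindep : ∀ ρ, 0 < ρ → iIndepFun
      (Sum.elim (Sum.elim (W ρ) (X ρ)) (Sum.elim (V ρ) (fun _ : Unit => Xd ρ))) P) :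
    Filter.Tendsto
      (fun ρ : ℝ => ρ ^ K *
        (P {ω | ∀ k, u ≤ W ρ k ω / (X ρ k ω + 1) → V ρ k ω < u * (Xd ρ ω + 1)}).toReal)
      Filter.atTop
      (nhds (u ^ K * ∑ L ∈ Finset.range (K + 1), (K.choose L : ℝ) *
        (∫ x, (x + 1) ∂gammaMeasure Ir μr) ^ (K - L) *
          ∫ x, (x + 1) ^ L ∂gammaMeasure Id' μd)) ∧
    0 < u ^ K * ∑ L ∈ Finset.range (K + 1), (K.choose L : ℝ) *
        (∫ x, (x + 1) ∂gammaMeasure Ir μr) ^ (K - L) *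
          ∫ x, (x + 1) ^ L ∂gammaMeasure Id' μd := by
  have hIr' : (0:ℝ) < (Ir : ℝ) := by exact_mod_cast Nat.lt_of_lt_of_le Nat.zero_lt_one hIr
  have hId'' : (0:ℝ) < (Id' : ℝ) := by exact_mod_cast Nat.lt_of_lt_of_le Nat.zero_lt_one hId
  haveI hprobr : IsProbabilityMeasure (gammaMeasure (Ir : ℝ) μr) :=
    isProbabilityMeasure_gammaMeasure hIr' hμr
  haveI hprobd : IsProbabilityMeasure (gammaMeasure (Id' : ℝ) μd) :=
    isProbabilityMeasure_gammaMeasure hId'' hμd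
  set νr := gammaMeasure (Ir : ℝ) μr with hνr
  set νd := gammaMeasure (Id' : ℝ) μd with hνd
  set M1 : ℝ := ∫ x, (x + 1) ∂νr with hM1
  set c : ℝ → ℝ := fun ρ => ∫ x, Real.exp (-(u * (x + 1) / ρ)) ∂νr with hc
  set F : ℝ → ℝ → ℝ := fun ρ y => (ρ * (1 - c ρ * Real.exp (-(u * (y + 1) / ρ)))) ^ K with hF
  -- integrability facts
  have hintr : ∀ L : ℕ, Integrable (fun x => (x + 1) ^ L) νr :=
    fun L => integrable_pow_gammaMeasure hIr' hμr L
  have hintd : ∀ L : ℕ, Integrable (fun y => (y + 1) ^ L) νd :=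
    fun L => integrable_pow_gammaMeasure hId'' hμd L
  have hM1_int : Integrable (fun x => x + 1) νr := by
    have := hintr 1; simpa using this
  have hM1_nonneg : 0 ≤ M1 := by
    rw [hM1]
    apply integral_nonneg_of_ae
    filter_upwards [ae_nonneg_gammaMeasure] with x hx
    simp only [Pi.zero_apply]
    linarith
  have hexp_cont : ∀ ρ : ℝ, Continuous (fun x : ℝ => Real.exp (-(u * (x + 1) / ρ))) := by
    intro ρ; fun_prop
  have hexp_int : ∀ ρ : ℝ, 0 < ρ → Integrable (fun x => Real.exp (-(u * (x + 1) / ρ))) νr := by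
    intro ρ hρ
    apply Integrable.mono' (integrable_const (1:ℝ)) (hexp_cont ρ).aestronglyMeasurable
    filter_upwards [ae_nonneg_gammaMeasure] with x hx
    rw [Real.norm_eq_abs, abs_of_nonneg (Real.exp_pos _).le, Real.exp_le_one_iff]
    have : 0 ≤ u * (x + 1) / ρ := by positivity
    linarith
  have hc_nonneg : ∀ ρ, 0 ≤ c ρ := by
    intro ρ
    apply integral_nonneg
    intro x
    exact (Real.exp_pos _).le
  have hc_le_one : ∀ ρ, 0 < ρ → c ρ ≤ 1 := by
    intro ρ hρ
    rw [hc]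
    calc ∫ x, Real.exp (-(u * (x + 1) / ρ)) ∂νr ≤ ∫ _, (1:ℝ) ∂νr := by
          apply integral_mono_ae (hexp_int ρ hρ) (integrable_const 1)
          filter_upwards [ae_nonneg_gammaMeasure] with x hx
          rw [Real.exp_le_one_iff]
          have : 0 ≤ u * (x + 1) / ρ := by positivity
          linarith
      _ = 1 := by simp
  -- identity for the inner function
  have hEq1 : ∀ ρ : ℝ, 0 < ρ → ∀ y : ℝ,
      ρ * (1 - c ρ * Real.exp (-(u * (y + 1) / ρ)))
        = ∫ x, ρ * (1 - Real.exp (-((u * (x + 1) + u * (y + 1)) / ρ))) ∂νr := by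
    intro ρ hρ y
    have hsplit : ∀ x : ℝ, Real.exp (-((u * (x + 1) + u * (y + 1)) / ρ))
        = Real.exp (-(u * (y + 1) / ρ)) * Real.exp (-(u * (x + 1) / ρ)) := by
      intro x
      rw [← Real.exp_add]
      congr 1
      field_simp
      ring
    have : (fun x => ρ * (1 - Real.exp (-((u * (x + 1) + u * (y + 1)) / ρ))))
        = fun x => ρ - (ρ * Real.exp (-(u * (y + 1) / ρ))) * Real.exp (-(u * (x + 1) / ρ)) := by
      funext x
      rw [hsplit x]
      ring
    rw [this, integral_sub (integrable_const ρ) (((hexp_int ρ hρ)).const_mul _),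
      integral_const, integral_const_mul]
    simp only [measure_univ, probReal_univ, ENNReal.toReal_one, smul_eq_mul, one_mul]
    have hcρ : c ρ = ∫ a, Real.exp (-(u * (a + 1) / ρ)) ∂νr := rfl
    rw [hcρ]
    ring
  -- bounds for the inner function
  have hGR_nonneg : ∀ ρ : ℝ, 0 < ρ → ∀ y : ℝ, 0 ≤ y →
      0 ≤ ρ * (1 - c ρ * Real.exp (-(u * (y + 1) / ρ))) := by
    intro ρ hρ y hy
    rw [hEq1 ρ hρ y]
    apply integral_nonneg_of_ae
    filter_upwards [ae_nonneg_gammaMeasure] with x hx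
    simp only [Pi.zero_apply]
    exact mul_one_sub_exp_nonneg hρ (by positivity)
  have hGR_le : ∀ ρ : ℝ, 0 < ρ → ∀ y : ℝ, 0 ≤ y →
      ρ * (1 - c ρ * Real.exp (-(u * (y + 1) / ρ))) ≤ u * M1 + u * (y + 1) := by
    intro ρ hρ y hy
    rw [hEq1 ρ hρ y]
    have hInt1 : Integrable (fun x => ρ * (1 - Real.exp (-((u * (x + 1) + u * (y + 1)) / ρ)))) νr := by
      have h1 : Integrable (fun x => Real.exp (-((u * (x + 1) + u * (y + 1)) / ρ))) νr := by
        apply Integrable.mono' (integrable_const (1:ℝ))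
          (by fun_prop : Continuous fun x : ℝ =>
            Real.exp (-((u * (x + 1) + u * (y + 1)) / ρ))).aestronglyMeasurable
        filter_upwards [ae_nonneg_gammaMeasure] with x hx
        rw [Real.norm_eq_abs, abs_of_nonneg (Real.exp_pos _).le, Real.exp_le_one_iff]
        have : 0 ≤ (u * (x + 1) + u * (y + 1)) / ρ := by positivity
        linarith
      exact ((integrable_const (1:ℝ)).sub h1).const_mul ρ
    have hInt2 : Integrable (fun x => u * (x + 1) + u * (y + 1)) νr :=
      (hM1_int.const_mul u).add (integrable_const _)
    calc ∫ x, ρ * (1 - Real.exp (-((u * (x + 1) + u * (y + 1)) / ρ))) ∂νr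
        ≤ ∫ x, (u * (x + 1) + u * (y + 1)) ∂νr := by
          apply integral_mono_ae hInt1 hInt2
          filter_upwards [ae_nonneg_gammaMeasure] with x hx
          exact mul_one_sub_exp_le hρ (by positivity)
      _ = u * M1 + u * (y + 1) := by
          rw [integral_add (hM1_int.const_mul u) (integrable_const _), integral_const_mul,
            integral_const]
          simp [hM1]
  -- inner limit
  have hinner : ∀ y : ℝ, 0 ≤ y →
      Tendsto (fun ρ : ℝ => ρ * (1 - c ρ * Real.exp (-(u * (y + 1) / ρ)))) atTop
        (nhds (u * M1 + u * (y + 1))) := by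
    intro y hy
    have hIntBound : Integrable (fun x => u * (x + 1) + u * (y + 1)) νr :=
      (hM1_int.const_mul u).add (integrable_const _)
    have hDCT := tendsto_integral_filter_of_dominated_convergence
      (μ := νr) (l := atTop) (F := fun ρ x => ρ * (1 - Real.exp (-((u * (x + 1) + u * (y + 1)) / ρ))))
      (f := fun x => u * (x + 1) + u * (y + 1))
      (bound := fun x => u * (x + 1) + u * (y + 1))
      (by
        filter_upwards [eventually_gt_atTop (0:ℝ)] with ρ hρ
        apply Continuous.aestronglyMeasurable
        fun_prop)
      (by
        filter_upwards [eventually_gt_atTop (0:ℝ)] with ρ hρ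
        filter_upwards [ae_nonneg_gammaMeasure] with x hx
        rw [Real.norm_eq_abs, abs_of_nonneg (mul_one_sub_exp_nonneg hρ (by positivity))]
        exact mul_one_sub_exp_le hρ (by positivity))
      hIntBound
      (by
        filter_upwards [ae_nonneg_gammaMeasure] with x hx
        exact tendsto_mul_one_sub_exp (by positivity))
    have hval : ∫ x, (u * (x + 1) + u * (y + 1)) ∂νr = u * M1 + u * (y + 1) := by
      rw [integral_add (hM1_int.const_mul u) (integrable_const _), integral_const_mul,
        integral_const]
      simp [hM1]
    rw [hval] at hDCT
    apply hDCT.congr'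
    filter_upwards [eventually_gt_atTop (0:ℝ)] with ρ hρ
    exact (hEq1 ρ hρ y).symm
  -- integrability of the outer bound
  have hBoundInt : Integrable (fun y => (u * M1 + u * (y + 1)) ^ K) νd := by
    have hrw : (fun y : ℝ => (u * M1 + u * (y + 1)) ^ K)
        = fun y => ∑ L ∈ Finset.range (K + 1),
            (u * (y + 1)) ^ L * (u * M1) ^ (K - L) * (K.choose L : ℝ) := by
      funext y
      rw [add_comm (u * M1), add_pow]
    rw [hrw]
    apply integrable_finset_sum
    intro L hL
    have := (hintd L).const_mul (u ^ L * (u * M1) ^ (K - L) * (K.choose L : ℝ))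
    apply this.congr
    apply ae_of_all
    intro y
    have h2 : (u * (y + 1)) ^ L = u ^ L * (y + 1) ^ L := mul_pow u (y + 1) L
    dsimp only
    rw [h2]
    ring
  -- outer limit
  have houter : Tendsto (fun ρ : ℝ => ∫ y, F ρ y ∂νd) atTop
      (nhds (∫ y, (u * M1 + u * (y + 1)) ^ K ∂νd)) := by
    apply tendsto_integral_filter_of_dominated_convergence
      (bound := fun y => (u * M1 + u * (y + 1)) ^ K)
    · filter_upwards [eventually_gt_atTop (0:ℝ)] with ρ hρ
      apply Continuous.aestronglyMeasurable
      rw [hF]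
      fun_prop
    · filter_upwards [eventually_gt_atTop (0:ℝ)] with ρ hρ
      filter_upwards [ae_nonneg_gammaMeasure] with y hy
      rw [hF, Real.norm_eq_abs, abs_of_nonneg (pow_nonneg (hGR_nonneg ρ hρ y hy) K)]
      exact pow_le_pow_left₀ (hGR_nonneg ρ hρ y hy) (hGR_le ρ hρ y hy) K
    · exact hBoundInt
    · filter_upwards [ae_nonneg_gammaMeasure] with y hy
      exact (hinner y hy).pow K
  -- value of the limit
  have hfinal_val : ∫ y, (u * M1 + u * (y + 1)) ^ K ∂νd
      = u ^ K * ∑ L ∈ Finset.range (K + 1), (K.choose L : ℝ) * M1 ^ (K - L)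
          * ∫ y, (y + 1) ^ L ∂νd := by
    have hrw : (fun y : ℝ => (u * M1 + u * (y + 1)) ^ K)
        = fun y => ∑ L ∈ Finset.range (K + 1),
            (u ^ K * ((K.choose L : ℝ) * M1 ^ (K - L))) * (y + 1) ^ L := by
      funext y
      rw [add_comm (u * M1), add_pow]
      apply Finset.sum_congr rfl
      intro L hL
      have hLK : L ≤ K := Nat.lt_succ_iff.mp (Finset.mem_range.mp hL)
      have hu' : u ^ K = u ^ L * u ^ (K - L) := by
        rw [← pow_add, Nat.add_sub_cancel' hLK]
      rw [mul_pow, mul_pow, hu']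
      ring
    rw [hrw, integral_finset_sum _ (fun L hL => (hintd L).const_mul _), Finset.mul_sum]
    apply Finset.sum_congr rfl
    intro L hL
    rw [integral_const_mul]
    ring
  -- positivity
  have hintd_nonneg : ∀ L : ℕ, 0 ≤ ∫ y, (y + 1) ^ L ∂νd := by
    intro L
    apply integral_nonneg_of_ae
    filter_upwards [ae_nonneg_gammaMeasure] with y hy
    simp only [Pi.zero_apply]
    positivity
  have hintd_K_ge : (1:ℝ) ≤ ∫ y, (y + 1) ^ K ∂νd := by
    have h1 : ∫ _, (1:ℝ) ∂νd = 1 := by simp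
    calc (1:ℝ) = ∫ _, (1:ℝ) ∂νd := h1.symm
      _ ≤ ∫ y, (y + 1) ^ K ∂νd := by
          apply integral_mono_ae (integrable_const 1) (hintd K)
          filter_upwards [ae_nonneg_gammaMeasure] with y hy
          calc (1:ℝ) = 1 ^ K := (one_pow K).symm
            _ ≤ (y + 1) ^ K := pow_le_pow_left₀ zero_le_one (by linarith) K
  have hpos : 0 < u ^ K * ∑ L ∈ Finset.range (K + 1), (K.choose L : ℝ) * M1 ^ (K - L)
      * ∫ y, (y + 1) ^ L ∂νd := by
    apply mul_pos (pow_pos hu K)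
    have hterm : ∀ L ∈ Finset.range (K + 1),
        0 ≤ (K.choose L : ℝ) * M1 ^ (K - L) * ∫ y, (y + 1) ^ L ∂νd := by
      intro L hL
      apply mul_nonneg (mul_nonneg (Nat.cast_nonneg _) (pow_nonneg hM1_nonneg _))
        (hintd_nonneg L)
    have hK_mem : K ∈ Finset.range (K + 1) := Finset.self_mem_range_succ K
    have hK_term : 0 < (K.choose K : ℝ) * M1 ^ (K - K) * ∫ y, (y + 1) ^ K ∂νd := by
      rw [Nat.choose_self, Nat.sub_self, pow_zero]
      simp only [Nat.cast_one, one_mul, mul_one]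
      linarith
    calc (0:ℝ) < (K.choose K : ℝ) * M1 ^ (K - K) * ∫ y, (y + 1) ^ K ∂νd := hK_term
      _ ≤ ∑ L ∈ Finset.range (K + 1), (K.choose L : ℝ) * M1 ^ (K - L)
          * ∫ y, (y + 1) ^ L ∂νd := Finset.single_le_sum hterm hK_mem
  -- main identity: for ρ > 0, ρ^K * Pout.toReal = ∫ F ρ dνd
  have hPoutEq : ∀ ρ : ℝ, 0 < ρ →
      ρ ^ K * (P {ω | ∀ k, u ≤ W ρ k ω / (X ρ k ω + 1) → V ρ k ω < u * (Xd ρ ω + 1)}).toReal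
        = ∫ y, F ρ y ∂νd := by
    intro ρ hρ
    have hPE := Pout_eq (hindep ρ hρ) (hWmeas ρ hρ) (hXmeas ρ hρ) (hVmeas ρ hρ) (hXdmeas ρ hρ)
      hu hρ hIr' hμr hId'' hμd (hWdist ρ hρ) (hXdist ρ hρ) (hVdist ρ hρ) (hXddist ρ hρ)
    have hcE : (∫⁻ x, ENNReal.ofReal (Real.exp (-(u * (x + 1) / ρ))) ∂νr)
        = ENNReal.ofReal (c ρ) := by
      rw [hc]
      exact (ofReal_integral_eq_lintegral_ofReal (hexp_int ρ hρ)
        (ae_of_all _ fun x => (Real.exp_pos _).le)).symm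
    rw [hPE, hcE]
    set G : ℝ → ENNReal := fun y => (1 - ENNReal.ofReal (c ρ)
      * ENNReal.ofReal (Real.exp (-(u * (y + 1) / ρ)))) ^ K with hG
    have hGle1 : ∀ y, G y ≤ 1 := fun y => pow_le_one' tsub_le_self K
    have hGmeas : Measurable G := by
      apply Measurable.pow_const
      apply Measurable.const_sub
      apply Measurable.const_mul
      apply Measurable.ennreal_ofReal
      fun_prop
    have htoReal : (∫⁻ y, G y ∂νd).toReal = ∫ y, (G y).toReal ∂νd :=
      (integral_toReal hGmeas.aemeasurable
        (ae_of_all _ fun y => lt_of_le_of_lt (hGle1 y) ENNReal.one_lt_top)).symm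
    rw [htoReal]
    have hcongr : ∫ y, (G y).toReal ∂νd
        = ∫ y, (1 - c ρ * Real.exp (-(u * (y + 1) / ρ))) ^ K ∂νd := by
      apply integral_congr_ae
      filter_upwards [ae_nonneg_gammaMeasure] with y hy
      have he1 : Real.exp (-(u * (y + 1) / ρ)) ≤ 1 := by
        rw [Real.exp_le_one_iff]
        have : 0 ≤ u * (y + 1) / ρ := by positivity
        linarith
      have hz : ENNReal.ofReal (c ρ) * ENNReal.ofReal (Real.exp (-(u * (y + 1) / ρ)))
          = ENNReal.ofReal (c ρ * Real.exp (-(u * (y + 1) / ρ))) :=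
        (ENNReal.ofReal_mul (hc_nonneg ρ)).symm
      have hz_le : ENNReal.ofReal (c ρ * Real.exp (-(u * (y + 1) / ρ))) ≤ 1 := by
        rw [ENNReal.ofReal_le_one]
        exact mul_le_one₀ (hc_le_one ρ hρ) (Real.exp_pos _).le he1
      rw [hG]
      simp only []
      rw [hz, ENNReal.toReal_pow, ENNReal.toReal_sub_of_le hz_le ENNReal.one_ne_top,
        ENNReal.toReal_one, ENNReal.toReal_ofReal
          (mul_nonneg (hc_nonneg ρ) (Real.exp_pos _).le)]
    rw [hcongr, ← integral_const_mul]
    apply integral_congr_ae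
    apply ae_of_all
    intro y
    rw [hF]
    simp only []
    rw [← mul_pow]
  constructor
  · have := houter.congr'
      (by
        filter_upwards [eventually_gt_atTop (0:ℝ)] with ρ hρ
        exact (hPoutEq ρ hρ).symm)
    rw [hfinal_val] at this
    exact this
  · rw [← hM1, ← hνr, ← hνd] at *
    exact hpos
end
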